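/- Let G=(V,E) be a finite simple undirected graph, let S₀ ⊆ V be nonempty, let T be a positive integer, and let τ be any stopping time for the volume-biased evolving set process with τ ≤ T almost surely. Define the cost of a sample path by cost(S₀,…,S_t) = μ(S₀) + Σ_{j=1}^{t} ( μ(S_j Δ S_{j-1}) + ∂(S_{j-1}) ). Then Ê_{S₀}[ cost(S₀,…,S_τ)/μ(S_τ) ] ≤ 1 + 4·√(T · log μ(V)). -/

import Mathlib

open scoped Classical symmDiff

noncomputable section

variable {V : Type*} [Fintype V] [DecidableEq V]

/-- The volume `μ(S)` of a set of vertices: the sum of the degrees. -/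
def vol (G : SimpleGraph V) [DecidableRel G.Adj] (S : Finset V) : ℝ :=
  ∑ x ∈ S, (G.degree x : ℝ)

/-- The number of edges leaving `S`, i.e. `∂(S) = e(S, Sᶜ)`. -/
def bdry (G : SimpleGraph V) [DecidableRel G.Adj] (S : Finset V) : ℝ :=
  ∑ x ∈ S, ((Sᶜ.filter (G.Adj x)).card : ℝ)

/-- The conductance `φ(S) = ∂(S)/μ(S)`. -/
def phiCond (G : SimpleGraph V) [DecidableRel G.Adj] (S : Finset V) : ℝ :=
  bdry G S / vol G S

/-- The lazy random walk kernel `p(x,y)`: `1/2` if `x = y`, `1/(2 d(x))` if `x ~ y`,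
and `0` otherwise. -/
def walkP (G : SimpleGraph V) [DecidableRel G.Adj] (x y : V) : ℝ :=
  if x = y then 1/2 else if G.Adj x y then 1 / (2 * (G.degree x : ℝ)) else 0

/-- `p(x,S) = Σ_{y∈S} p(x,y)`. -/
def pset (G : SimpleGraph V) [DecidableRel G.Adj] (x : V) (S : Finset V) : ℝ :=
  ∑ y ∈ S, walkP G x y

/-- One step of the evolving set process from `S` with threshold `u`:
`S₁ = {y : p(y,S) ≥ u}`. -/
def esStep (G : SimpleGraph V) [DecidableRel G.Adj] (S : Finset V) (u : ℝ) : Finset V :=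
  Finset.univ.filter fun y => u ≤ pset G y S

/-- The ESP transition kernel `K(S,S')`: the probability, for a uniform threshold
`U ∈ [0,1]`, that `{y : p(y,S) ≥ U} = S'`. -/
def Kk (G : SimpleGraph V) [DecidableRel G.Adj] (S S' : Finset V) : ℝ :=
  (MeasureTheory.volume {u : ℝ | u ∈ Set.Icc (0:ℝ) 1 ∧ esStep G S u = S'}).toReal

/-- The volume-biased ESP transition kernel `K̂(S,S') = (μ(S')/μ(S)) K(S,S')`. -/
def Khat (G : SimpleGraph V) [DecidableRel G.Adj] (S S' : Finset V) : ℝ :=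
  vol G S' / vol G S * Kk G S S'

/-- The cost of the sample path `(s 0, …, s t)`:
`cost = μ(S₀) + Σ_{j=1}^{t} (μ(S_j Δ S_{j-1}) + ∂(S_{j-1}))`. -/
def costPath (G : SimpleGraph V) [DecidableRel G.Adj] (s : ℕ → Finset V) (t : ℕ) : ℝ :=
  vol G (s 0) + ∑ j ∈ Finset.range t, (vol G (symmDiff (s (j+1)) (s j)) + bdry G (s j))

/-- Expectation of a path functional `f` (depending only on coordinates `0, …, T`)
over length-`(T+1)` sample paths of the Markov chain with transition kernel `κ`
started at `S₀`; the finite path is extended to an infinite one by freezing it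
after time `T`. -/
def EpathN (κ : Finset V → Finset V → ℝ) (S₀ : Finset V) (T : ℕ)
    (f : (ℕ → Finset V) → ℝ) : ℝ :=
  ∑ w : Fin (T+1) → Finset V,
    if w 0 = S₀ then
      (∏ j : Fin T, κ (w j.castSucc) (w j.succ)) *
        f (fun n => w ⟨min n T, Nat.lt_succ_of_le (min_le_right n T)⟩)
    else 0

/-- `τ` is a stopping time for the natural filtration: the event `τ = n` depends only
on the first `n+1` coordinates of the path. -/
def IsStopping (τ : (ℕ → Finset V) → ℕ) : Prop :=
  ∀ (s s' : ℕ → Finset V) (n : ℕ), τ s = n → (∀ i ≤ n, s' i = s i) → τ s' = n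

set_option linter.unusedSectionVars false
open Finset MeasureTheory Real

variable {G : SimpleGraph V} [DecidableRel G.Adj]

lemma vol_nonneg (S : Finset V) : 0 ≤ vol G S :=
  Finset.sum_nonneg fun _ _ => by positivity

lemma bdry_nonneg (S : Finset V) : 0 ≤ bdry G S :=
  Finset.sum_nonneg fun _ _ => by positivity

lemma card_filter_adj_le_degree (S : Finset V) (y : V) :
    (S.filter (G.Adj y)).card ≤ G.degree y := by
  rw [← SimpleGraph.card_neighborFinset_eq_degree, SimpleGraph.neighborFinset_eq_filter]
  exact Finset.card_le_card (fun z hz => by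
    simp only [Finset.mem_filter] at hz ⊢; exact ⟨Finset.mem_univ _, hz.2⟩)

lemma bdry_le_vol (S : Finset V) : bdry G S ≤ vol G S := by
  refine Finset.sum_le_sum fun x _ => ?_
  exact_mod_cast card_filter_adj_le_degree Sᶜ x

lemma vol_le_vol_univ (S : Finset V) : vol G S ≤ vol G Finset.univ :=
  Finset.sum_le_sum_of_subset_of_nonneg (Finset.subset_univ S) (fun _ _ _ => by positivity)

lemma phiCond_nonneg (S : Finset V) : 0 ≤ phiCond G S :=
  div_nonneg (bdry_nonneg S) (vol_nonneg S)

lemma phiCond_le_one (S : Finset V) : phiCond G S ≤ 1 := by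
  rcases eq_or_lt_of_le (vol_nonneg (G := G) S) with h | h
  · simp [phiCond, ← h]
  · exact div_le_one_of_le₀ (bdry_le_vol S) (vol_nonneg S)

lemma bdry_eq_vol_mul_phi (S : Finset V) : bdry G S = vol G S * phiCond G S := by
  rcases eq_or_lt_of_le (vol_nonneg (G := G) S) with h | h
  · have h2 : bdry G S = 0 := le_antisymm (by rw [h]; exact bdry_le_vol S) (bdry_nonneg S)
    rw [← h, h2, zero_mul]
  · exact (mul_div_cancel₀ (bdry G S) h.ne').symm

lemma walkP_eq (y z : V) :
    walkP G y z = (if y = z then (1:ℝ)/2 else 0)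
      + (if G.Adj y z then 1 / (2 * (G.degree y : ℝ)) else 0) := by
  unfold walkP
  by_cases h : y = z
  · subst h; simp [SimpleGraph.irrefl]
  · simp [h]

lemma pset_eq (y : V) (S : Finset V) :
    pset G y S = (if y ∈ S then (1:ℝ)/2 else 0)
      + ((S.filter (G.Adj y)).card : ℝ) / (2 * (G.degree y : ℝ)) := by
  unfold pset
  simp only [walkP_eq, Finset.sum_add_distrib]
  congr 1
  · simp [Finset.sum_ite_eq S]
  · rw [← Finset.sum_filter, Finset.sum_const, nsmul_eq_mul, mul_one_div]

lemma frac_nonneg (y : V) (S : Finset V) :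
    0 ≤ ((S.filter (G.Adj y)).card : ℝ) / (2 * (G.degree y : ℝ)) := by positivity

lemma frac_le_half (y : V) (S : Finset V) :
    ((S.filter (G.Adj y)).card : ℝ) / (2 * (G.degree y : ℝ)) ≤ 1/2 := by
  rcases Nat.eq_zero_or_pos (G.degree y) with h | h
  · have : (S.filter (G.Adj y)).card = 0 := Nat.le_zero.mp (h ▸ card_filter_adj_le_degree S y)
    simp [this]
  · rw [div_le_div_iff₀ (by positivity) (by norm_num)]
    have := card_filter_adj_le_degree (G := G) S y
    have h2 : ((S.filter (G.Adj y)).card : ℝ) ≤ (G.degree y : ℝ) := by exact_mod_cast this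
    nlinarith [h2]

lemma pset_nonneg (y : V) (S : Finset V) : 0 ≤ pset G y S := by
  rw [pset_eq]
  have := frac_nonneg (G := G) y S
  split <;> linarith

lemma pset_le_one (y : V) (S : Finset V) : pset G y S ≤ 1 := by
  rw [pset_eq]
  have := frac_le_half (G := G) y S
  split <;> linarith

lemma half_le_pset (y : V) (S : Finset V) (h : y ∈ S) : 1/2 ≤ pset G y S := by
  rw [pset_eq, if_pos h]
  have := frac_nonneg (G := G) y S
  linarith

lemma pset_le_half (y : V) (S : Finset V) (h : y ∉ S) : pset G y S ≤ 1/2 := by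
  rw [pset_eq, if_neg h]
  have := frac_le_half (G := G) y S
  linarith

lemma mem_esStep (y : V) (S : Finset V) (u : ℝ) :
    y ∈ esStep G S u ↔ u ≤ pset G y S := by
  simp [esStep]

/-! ### Measure-theoretic facts about the kernel -/

def KJ (G : SimpleGraph V) [DecidableRel G.Adj] (J : Set ℝ) (S S' : Finset V) : ℝ :=
  (MeasureTheory.volume {u : ℝ | u ∈ J ∧ esStep G S u = S'}).toReal

lemma Kk_eq_KJ (S S' : Finset V) : Kk G S S' = KJ G (Set.Icc 0 1) S S' := rfl

lemma KJ_nonneg (J : Set ℝ) (S S' : Finset V) : 0 ≤ KJ G J S S' := ENNReal.toReal_nonneg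

lemma Kk_nonneg (S S' : Finset V) : 0 ≤ Kk G S S' := ENNReal.toReal_nonneg

lemma measurable_esStep_eq (S S' : Finset V) :
    MeasurableSet {u : ℝ | esStep G S u = S'} := by
  have : {u : ℝ | esStep G S u = S'} = ⋂ y : V, {u : ℝ | u ≤ pset G y S ↔ y ∈ S'} := by
    ext u
    simp only [Set.mem_setOf_eq, Set.mem_iInter, Finset.ext_iff, mem_esStep]
  rw [this]
  refine MeasurableSet.iInter fun y => ?_
  by_cases h : y ∈ S'
  · simp only [h, iff_true]
    exact measurableSet_Iic
  · simp only [h, iff_false, not_le]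
    exact measurableSet_Ioi

lemma measurable_KJset (J : Set ℝ) (hJ : MeasurableSet J) (S S' : Finset V) :
    MeasurableSet {u : ℝ | u ∈ J ∧ esStep G S u = S'} :=
  hJ.inter (measurable_esStep_eq S S')

lemma sum_KJ_filter (J : Set ℝ) (hJ : MeasurableSet J) (hJf : MeasureTheory.volume J ≠ ⊤)
    (S : Finset V) (C : Finset V → Prop) [DecidablePred C] :
    ∑ S' ∈ Finset.univ.filter C, KJ G J S S'
      = (MeasureTheory.volume {u : ℝ | u ∈ J ∧ C (esStep G S u)}).toReal := by
  classical
  set A : Finset V → Set ℝ := fun S' => {u : ℝ | u ∈ J ∧ esStep G S u = S'} with hA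
  have hAm : ∀ S', MeasurableSet (A S') := fun S' => measurable_KJset J hJ S S'
  have hfin : ∀ S', MeasureTheory.volume (A S') ≠ ⊤ := fun S' =>
    ne_top_of_le_ne_top hJf (measure_mono fun u hu => hu.1)
  have hU : {u : ℝ | u ∈ J ∧ C (esStep G S u)} = ⋃ S' ∈ Finset.univ.filter C, A S' := by
    ext u
    simp only [Set.mem_setOf_eq, Set.mem_iUnion, Finset.mem_filter, Finset.mem_univ, true_and, hA]
    constructor
    · rintro ⟨huJ, hC⟩
      exact ⟨esStep G S u, hC, huJ, rfl⟩
    · rintro ⟨S', hC, huJ, he⟩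
      exact ⟨huJ, he ▸ hC⟩
  have hdisj : Set.PairwiseDisjoint (↑(Finset.univ.filter C) : Set (Finset V)) A := by
    intro a _ b _ hab
    refine Set.disjoint_left.mpr fun u hua hub => hab ?_
    exact hua.2.symm.trans hub.2
  rw [hU, measure_biUnion_finset hdisj fun S' _ => hAm S']
  rw [ENNReal.toReal_sum fun S' _ => hfin S']
  rfl

lemma sum_KJ (J : Set ℝ) (hJ : MeasurableSet J) (hJf : MeasureTheory.volume J ≠ ⊤)
    (S : Finset V) : ∑ S', KJ G J S S' = (MeasureTheory.volume J).toReal := by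
  have := sum_KJ_filter (G := G) J hJ hJf S (fun _ => True)
  simpa using this

lemma sum_KJ_mem (J : Set ℝ) (hJ : MeasurableSet J) (hJf : MeasureTheory.volume J ≠ ⊤)
    (S : Finset V) (y : V) :
    ∑ S' ∈ Finset.univ.filter (fun S' => y ∈ S'), KJ G J S S'
      = (MeasureTheory.volume {u : ℝ | u ∈ J ∧ u ≤ pset G y S}).toReal := by
  rw [sum_KJ_filter J hJ hJf S (fun S' => y ∈ S')]
  have : {u : ℝ | u ∈ J ∧ y ∈ esStep G S u} = {u : ℝ | u ∈ J ∧ u ≤ pset G y S} := by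
    ext u; simp [mem_esStep]
  rw [this]

lemma sum_KJ_vol (J : Set ℝ) (hJ : MeasurableSet J) (hJf : MeasureTheory.volume J ≠ ⊤)
    (S : Finset V) :
    ∑ S', KJ G J S S' * vol G S'
      = ∑ y, (G.degree y : ℝ)
          * (MeasureTheory.volume {u : ℝ | u ∈ J ∧ u ≤ pset G y S}).toReal := by
  have hvol : ∀ S' : Finset V, vol G S' = ∑ y, if y ∈ S' then (G.degree y : ℝ) else 0 := by
    intro S'
    rw [Finset.sum_ite_mem, Finset.univ_inter]
    rfl
  calc ∑ S', KJ G J S S' * vol G S'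
      = ∑ S', ∑ y, (if y ∈ S' then KJ G J S S' * (G.degree y : ℝ) else 0) := by
        refine Finset.sum_congr rfl fun S' _ => ?_
        rw [hvol S', Finset.mul_sum]
        exact Finset.sum_congr rfl fun y _ => by split <;> simp
    _ = ∑ y, ∑ S', (if y ∈ S' then KJ G J S S' * (G.degree y : ℝ) else 0) := Finset.sum_comm
    _ = ∑ y, (G.degree y : ℝ)
          * (MeasureTheory.volume {u : ℝ | u ∈ J ∧ u ≤ pset G y S}).toReal := by
        refine Finset.sum_congr rfl fun y _ => ?_
        rw [← Finset.sum_filter, ← sum_KJ_mem J hJ hJf S y, Finset.mul_sum]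
        exact Finset.sum_congr rfl fun S' _ => mul_comm _ _

/-! ### Concrete measure values -/

lemma measIcc_le {p : ℝ} (h0 : 0 ≤ p) (h1 : p ≤ 1) :
    (MeasureTheory.volume {u : ℝ | u ∈ Set.Icc (0:ℝ) 1 ∧ u ≤ p}).toReal = p := by
  have : {u : ℝ | u ∈ Set.Icc (0:ℝ) 1 ∧ u ≤ p} = Set.Icc 0 p := by
    ext u
    simp only [Set.mem_setOf_eq, Set.mem_Icc]
    exact ⟨fun h => ⟨h.1.1, h.2⟩, fun h => ⟨⟨h.1, le_trans h.2 h1⟩, h.2⟩⟩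
  rw [this, Real.volume_Icc, ENNReal.toReal_ofReal (by linarith)]
  ring

lemma measIcc_not_le {p : ℝ} (h0 : 0 ≤ p) (h1 : p ≤ 1) :
    (MeasureTheory.volume {u : ℝ | u ∈ Set.Icc (0:ℝ) 1 ∧ ¬ u ≤ p}).toReal = 1 - p := by
  have : {u : ℝ | u ∈ Set.Icc (0:ℝ) 1 ∧ ¬ u ≤ p} = Set.Ioc p 1 := by
    ext u
    simp only [Set.mem_setOf_eq, Set.mem_Icc, Set.mem_Ioc, not_le]
    exact ⟨fun h => ⟨h.2, h.1.2⟩, fun h => ⟨⟨le_trans h0 h.1.le, h.2⟩, h.1⟩⟩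
  rw [this, Real.volume_Ioc, ENNReal.toReal_ofReal (by linarith)]

lemma measJ1_big {p : ℝ} (h : 1/2 ≤ p) :
    (MeasureTheory.volume {u : ℝ | u ∈ Set.Ioc (0:ℝ) (1/2) ∧ u ≤ p}).toReal = 1/2 := by
  have : {u : ℝ | u ∈ Set.Ioc (0:ℝ) (1/2) ∧ u ≤ p} = Set.Ioc 0 (1/2) := by
    ext u
    simp only [Set.mem_setOf_eq, Set.mem_Ioc]
    exact ⟨fun h => h.1, fun hu => ⟨hu, le_trans hu.2 h⟩⟩
  rw [this, Real.volume_Ioc, ENNReal.toReal_ofReal (by norm_num)]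
  norm_num

lemma measJ1_small {p : ℝ} (h0 : 0 ≤ p) (h : p ≤ 1/2) :
    (MeasureTheory.volume {u : ℝ | u ∈ Set.Ioc (0:ℝ) (1/2) ∧ u ≤ p}).toReal = p := by
  have : {u : ℝ | u ∈ Set.Ioc (0:ℝ) (1/2) ∧ u ≤ p} = Set.Ioc 0 p := by
    ext u
    simp only [Set.mem_setOf_eq, Set.mem_Ioc]
    exact ⟨fun h => ⟨h.1.1, h.2⟩, fun hu => ⟨⟨hu.1, le_trans hu.2 h⟩, hu.2⟩⟩
  rw [this, Real.volume_Ioc, ENNReal.toReal_ofReal (by linarith)]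
  ring

lemma measJ2_big {p : ℝ} (h : 1/2 ≤ p) (h1 : p ≤ 1) :
    (MeasureTheory.volume {u : ℝ | u ∈ Set.Ioc (1/2 : ℝ) 1 ∧ u ≤ p}).toReal = p - 1/2 := by
  have : {u : ℝ | u ∈ Set.Ioc (1/2:ℝ) 1 ∧ u ≤ p} = Set.Ioc (1/2) p := by
    ext u
    simp only [Set.mem_setOf_eq, Set.mem_Ioc]
    exact ⟨fun h => ⟨h.1.1, h.2⟩, fun hu => ⟨⟨hu.1, le_trans hu.2 h1⟩, hu.2⟩⟩
  rw [this, Real.volume_Ioc, ENNReal.toReal_ofReal (by linarith)]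

lemma measJ2_small {p : ℝ} (h : p ≤ 1/2) :
    (MeasureTheory.volume {u : ℝ | u ∈ Set.Ioc (1/2 : ℝ) 1 ∧ u ≤ p}).toReal = 0 := by
  have : {u : ℝ | u ∈ Set.Ioc (1/2:ℝ) 1 ∧ u ≤ p} = ∅ := by
    ext u
    simp only [Set.mem_setOf_eq, Set.mem_Ioc, Set.mem_empty_iff_false, iff_false, not_and]
    rintro ⟨hu, -⟩ hup
    linarith
  rw [this]
  simp

/-! ### Vertex-level identities -/

lemma edge_split (y : V) (S : Finset V) :
    (S.filter (G.Adj y)).card + (Sᶜ.filter (G.Adj y)).card = G.degree y := by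
  rw [← SimpleGraph.card_neighborFinset_eq_degree, SimpleGraph.neighborFinset_eq_filter,
    ← Finset.card_union_of_disjoint
      (Finset.disjoint_filter_filter (disjoint_compl_right)),
    ← Finset.filter_union, Finset.union_compl]

lemma deg_mul_one_sub_pset {y : V} {S : Finset V} (h : y ∈ S) :
    (G.degree y : ℝ) * (1 - pset G y S) = ((Sᶜ.filter (G.Adj y)).card : ℝ) / 2 := by
  rcases Nat.eq_zero_or_pos (G.degree y) with hd | hd
  · have h1 : (Sᶜ.filter (G.Adj y)).card = 0 :=
      Nat.le_zero.mp (hd ▸ card_filter_adj_le_degree Sᶜ y)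
    simp [hd, h1]
  · have hsplit := edge_split (G := G) y S
    have hd' : ((G.degree y : ℝ)) ≠ 0 := by positivity
    rw [pset_eq, if_pos h]
    have hcast : ((S.filter (G.Adj y)).card : ℝ) + ((Sᶜ.filter (G.Adj y)).card : ℝ)
        = (G.degree y : ℝ) := by exact_mod_cast hsplit
    have key : (G.degree y : ℝ) * (((S.filter (G.Adj y)).card : ℝ) / (2 * (G.degree y : ℝ)))
        = ((S.filter (G.Adj y)).card : ℝ) / 2 := by
      rw [mul_div_assoc', mul_comm, mul_div_assoc, div_mul_cancel_right₀ hd']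
      ring
    rw [mul_sub, mul_add, key]
    linarith

lemma deg_mul_pset_of_not_mem {y : V} {S : Finset V} (h : y ∉ S) :
    (G.degree y : ℝ) * pset G y S = ((S.filter (G.Adj y)).card : ℝ) / 2 := by
  rcases Nat.eq_zero_or_pos (G.degree y) with hd | hd
  · have h1 : (S.filter (G.Adj y)).card = 0 :=
      Nat.le_zero.mp (hd ▸ card_filter_adj_le_degree S y)
    simp [hd, h1]
  · have hd' : ((G.degree y : ℝ)) ≠ 0 := by positivity
    rw [pset_eq, if_neg h]
    field_simp
    ring

lemma deg_mul_pset_sub_half {y : V} {S : Finset V} (h : y ∈ S) :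
    (G.degree y : ℝ) * (pset G y S - 1/2) = ((S.filter (G.Adj y)).card : ℝ) / 2 := by
  rcases Nat.eq_zero_or_pos (G.degree y) with hd | hd
  · have h1 : (S.filter (G.Adj y)).card = 0 :=
      Nat.le_zero.mp (hd ▸ card_filter_adj_le_degree S y)
    simp [hd, h1]
  · have hd' : ((G.degree y : ℝ)) ≠ 0 := by positivity
    rw [pset_eq, if_pos h]
    field_simp
    ring

lemma bdry_eq_sum_compl (S : Finset V) :
    bdry G S = ∑ y ∈ Sᶜ, ((S.filter (G.Adj y)).card : ℝ) := by
  unfold bdry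
  have : ∀ (A B : Finset V), ∑ x ∈ A, ((B.filter (G.Adj x)).card : ℝ)
      = ∑ x ∈ A, ∑ y ∈ B, (if G.Adj x y then (1:ℝ) else 0) := by
    intro A B
    refine Finset.sum_congr rfl fun x _ => ?_
    rw [Finset.card_filter]
    push_cast
    rfl
  rw [this S Sᶜ, this Sᶜ S, Finset.sum_comm]
  refine Finset.sum_congr rfl fun y _ => Finset.sum_congr rfl fun x _ => ?_
  simp [G.adj_comm]

lemma sum_mem_filter_eq (S : Finset V) :
    ∑ y ∈ S, ((S.filter (G.Adj y)).card : ℝ) = vol G S - bdry G S := by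
  have h : ∀ y ∈ S, ((S.filter (G.Adj y)).card : ℝ)
      = (G.degree y : ℝ) - ((Sᶜ.filter (G.Adj y)).card : ℝ) := by
    intro y _
    have := edge_split (G := G) y S
    have : ((S.filter (G.Adj y)).card : ℝ) + ((Sᶜ.filter (G.Adj y)).card : ℝ)
        = (G.degree y : ℝ) := by exact_mod_cast this
    linarith
  rw [Finset.sum_congr rfl h, Finset.sum_sub_distrib]
  rfl

/-! ### Martingale identities for the kernel -/

lemma sum_deg_mul_walkP (z : V) :
    ∑ y, (G.degree y : ℝ) * walkP G y z = (G.degree z : ℝ) := by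
  have hsym : ∀ y, (G.degree y : ℝ) * walkP G y z = (G.degree z : ℝ) * walkP G z y := by
    intro y
    unfold walkP
    by_cases h : y = z
    · subst h; rfl
    · have h' : ¬ z = y := fun hz => h hz.symm
      rw [if_neg h, if_neg h']
      by_cases ha : G.Adj y z
      · have ha' : G.Adj z y := ha.symm
        rw [if_pos ha, if_pos ha']
        have hy : 0 < G.degree y := by
          rw [← SimpleGraph.card_neighborFinset_eq_degree]
          exact Finset.card_pos.mpr ⟨z, by simp [ha]⟩
        have hz : 0 < G.degree z := by
          rw [← SimpleGraph.card_neighborFinset_eq_degree]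
          exact Finset.card_pos.mpr ⟨y, by simp [ha']⟩
        have hy' : ((G.degree y : ℝ)) ≠ 0 := by positivity
        have hz' : ((G.degree z : ℝ)) ≠ 0 := by positivity
        field_simp
      · have ha' : ¬ G.Adj z y := fun hz => ha hz.symm
        rw [if_neg ha, if_neg ha']
        simp
  rw [Finset.sum_congr rfl fun y _ => hsym y, ← Finset.mul_sum]
  have : ∑ y, walkP G z y = pset G z Finset.univ := rfl
  rw [this, pset_eq]
  rw [if_pos (Finset.mem_univ z)]
  have hfil : (Finset.univ.filter (G.Adj z)).card = G.degree z := by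
    rw [← SimpleGraph.card_neighborFinset_eq_degree, SimpleGraph.neighborFinset_eq_filter]
  rw [hfil]
  rcases Nat.eq_zero_or_pos (G.degree z) with hd | hd
  · simp [hd]
  · have hd' : ((G.degree z : ℝ)) ≠ 0 := by positivity
    have : (G.degree z : ℝ)/(2*(G.degree z : ℝ)) = 1/2 := by
      rw [div_eq_iff (by positivity)]; ring
    rw [this]
    ring

lemma sum_deg_mul_pset (S : Finset V) :
    ∑ y, (G.degree y : ℝ) * pset G y S = vol G S := by
  unfold pset
  calc ∑ y, (G.degree y : ℝ) * ∑ z ∈ S, walkP G y z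
      = ∑ y, ∑ z ∈ S, (G.degree y : ℝ) * walkP G y z := by
        exact Finset.sum_congr rfl fun y _ => Finset.mul_sum _ _ _
    _ = ∑ z ∈ S, ∑ y, (G.degree y : ℝ) * walkP G y z := Finset.sum_comm
    _ = ∑ z ∈ S, (G.degree z : ℝ) := Finset.sum_congr rfl fun z _ => sum_deg_mul_walkP z
    _ = vol G S := rfl

/-! ### Row-sum identities for `Kk` -/

lemma meas_Icc01_ne_top : MeasureTheory.volume (Set.Icc (0:ℝ) 1) ≠ ⊤ := by
  rw [Real.volume_Icc]; exact ENNReal.ofReal_ne_top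

lemma meas_J1_ne_top : MeasureTheory.volume (Set.Ioc (0:ℝ) (1/2)) ≠ ⊤ := by
  rw [Real.volume_Ioc]; exact ENNReal.ofReal_ne_top

lemma meas_J2_ne_top : MeasureTheory.volume (Set.Ioc (1/2:ℝ) 1) ≠ ⊤ := by
  rw [Real.volume_Ioc]; exact ENNReal.ofReal_ne_top

lemma sum_Kk (S : Finset V) : ∑ S', Kk G S S' = 1 := by
  simp only [Kk_eq_KJ]
  rw [sum_KJ _ measurableSet_Icc meas_Icc01_ne_top, Real.volume_Icc]
  rw [ENNReal.toReal_ofReal (by norm_num)]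
  norm_num

lemma sum_Kk_vol (S : Finset V) : ∑ S', Kk G S S' * vol G S' = vol G S := by
  simp only [Kk_eq_KJ]
  rw [sum_KJ_vol _ measurableSet_Icc meas_Icc01_ne_top]
  rw [Finset.sum_congr rfl fun y _ => by
    rw [measIcc_le (pset_nonneg y S) (pset_le_one y S)]]
  exact sum_deg_mul_pset S

lemma Kk_mul_vol_eq_zero {S : Finset V} (h : vol G S = 0) (S' : Finset V) :
    Kk G S S' * vol G S' = 0 := by
  have hsum : ∑ S', Kk G S S' * vol G S' = 0 := by rw [sum_Kk_vol S, h]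
  have hnn : ∀ S'' ∈ Finset.univ, 0 ≤ Kk G S S'' * vol G S'' := fun S'' _ =>
    mul_nonneg (Kk_nonneg S S'') (vol_nonneg S'')
  exact (Finset.sum_eq_zero_iff_of_nonneg hnn).mp hsum S' (Finset.mem_univ S')

lemma sum_Kk_symmDiff (S : Finset V) :
    ∑ S', Kk G S S' * vol G (symmDiff S' S) = bdry G S := by
  simp only [Kk_eq_KJ]
  have hvol : ∀ S' : Finset V, vol G (symmDiff S' S)
      = ∑ y, if y ∈ symmDiff S' S then (G.degree y : ℝ) else 0 := by
    intro S'
    rw [Finset.sum_ite_mem, Finset.univ_inter]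
    rfl
  have swap : ∑ S', KJ G (Set.Icc 0 1) S S' * vol G (symmDiff S' S)
      = ∑ y, (G.degree y : ℝ) * ∑ S' ∈ Finset.univ.filter (fun S' => y ∈ symmDiff S' S),
          KJ G (Set.Icc 0 1) S S' := by
    calc ∑ S', KJ G (Set.Icc 0 1) S S' * vol G (symmDiff S' S)
        = ∑ S', ∑ y, (if y ∈ symmDiff S' S then KJ G (Set.Icc 0 1) S S' * (G.degree y : ℝ)
            else 0) := by
          refine Finset.sum_congr rfl fun S' _ => ?_
          rw [hvol S', Finset.mul_sum]
          exact Finset.sum_congr rfl fun y _ => by split <;> simp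
      _ = ∑ y, ∑ S', (if y ∈ symmDiff S' S then KJ G (Set.Icc 0 1) S S' * (G.degree y : ℝ)
            else 0) := Finset.sum_comm
      _ = _ := by
          refine Finset.sum_congr rfl fun y _ => ?_
          rw [← Finset.sum_filter, Finset.mul_sum]
          exact Finset.sum_congr rfl fun S' _ => mul_comm _ _
  rw [swap]
  have hval : ∀ y, (G.degree y : ℝ) * ∑ S' ∈ Finset.univ.filter (fun S' => y ∈ symmDiff S' S),
      KJ G (Set.Icc 0 1) S S'
      = if y ∈ S then ((Sᶜ.filter (G.Adj y)).card : ℝ)/2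
        else ((S.filter (G.Adj y)).card : ℝ)/2 := by
    intro y
    rw [sum_KJ_filter _ measurableSet_Icc meas_Icc01_ne_top S
      (fun S' => y ∈ symmDiff S' S)]
    by_cases h : y ∈ S
    · have hset : {u : ℝ | u ∈ Set.Icc (0:ℝ) 1 ∧ y ∈ symmDiff (esStep G S u) S}
          = {u : ℝ | u ∈ Set.Icc (0:ℝ) 1 ∧ ¬ u ≤ pset G y S} := by
        ext u
        simp [Finset.mem_symmDiff, mem_esStep, h]
      rw [if_pos h, hset, measIcc_not_le (pset_nonneg y S) (pset_le_one y S)]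
      exact deg_mul_one_sub_pset h
    · have hset : {u : ℝ | u ∈ Set.Icc (0:ℝ) 1 ∧ y ∈ symmDiff (esStep G S u) S}
          = {u : ℝ | u ∈ Set.Icc (0:ℝ) 1 ∧ u ≤ pset G y S} := by
        ext u
        simp [Finset.mem_symmDiff, mem_esStep, h]
      rw [if_neg h, hset, measIcc_le (pset_nonneg y S) (pset_le_one y S)]
      exact deg_mul_pset_of_not_mem h
  rw [Finset.sum_congr rfl fun y _ => hval y]
  rw [← Finset.sum_add_sum_compl S]
  rw [Finset.sum_congr rfl fun y hy => if_pos hy,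
    Finset.sum_congr rfl fun y hy => if_neg (Finset.mem_compl.mp hy)]
  rw [← Finset.sum_div, ← Finset.sum_div, ← bdry_eq_sum_compl]
  have : bdry G S = ∑ x ∈ S, ((Sᶜ.filter (G.Adj x)).card : ℝ) := rfl
  rw [← this]
  ring

/-! ### Splitting the kernel at 1/2 -/

lemma Kk_split (S S' : Finset V) :
    Kk G S S' = KJ G (Set.Ioc 0 (1/2)) S S' + KJ G (Set.Ioc (1/2) 1) S S' := by
  unfold Kk KJ
  have hB := measurable_esStep_eq (G := G) S S'
  have e1 : {u : ℝ | u ∈ Set.Icc (0:ℝ) 1 ∧ esStep G S u = S'}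
      = Set.Icc (0:ℝ) 1 ∩ {u | esStep G S u = S'} := rfl
  have e2 : {u : ℝ | u ∈ Set.Ioc (0:ℝ) (1/2) ∧ esStep G S u = S'}
      = Set.Ioc (0:ℝ) (1/2) ∩ {u | esStep G S u = S'} := rfl
  have e3 : {u : ℝ | u ∈ Set.Ioc (1/2:ℝ) 1 ∧ esStep G S u = S'}
      = Set.Ioc (1/2:ℝ) 1 ∩ {u | esStep G S u = S'} := rfl
  rw [e1, e2, e3]
  have hIoc : MeasureTheory.volume (Set.Icc (0:ℝ) 1 ∩ {u | esStep G S u = S'})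
      = MeasureTheory.volume (Set.Ioc (0:ℝ) 1 ∩ {u | esStep G S u = S'}) := by
    refine le_antisymm ?_ (measure_mono (Set.inter_subset_inter_left _ Set.Ioc_subset_Icc_self))
    have hsub : Set.Icc (0:ℝ) 1 ∩ {u | esStep G S u = S'}
        ⊆ ({0} : Set ℝ) ∪ (Set.Ioc (0:ℝ) 1 ∩ {u | esStep G S u = S'}) := by
      rintro u ⟨⟨h0, h1⟩, hu⟩
      rcases eq_or_lt_of_le h0 with h | h
      · exact Or.inl (by simp [← h])
      · exact Or.inr ⟨⟨h, h1⟩, hu⟩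
    calc MeasureTheory.volume (Set.Icc (0:ℝ) 1 ∩ {u | esStep G S u = S'})
        ≤ MeasureTheory.volume (({0} : Set ℝ) ∪ (Set.Ioc (0:ℝ) 1 ∩ {u | esStep G S u = S'})) :=
          measure_mono hsub
      _ ≤ MeasureTheory.volume ({0} : Set ℝ)
          + MeasureTheory.volume (Set.Ioc (0:ℝ) 1 ∩ {u | esStep G S u = S'}) :=
          measure_union_le _ _
      _ = MeasureTheory.volume (Set.Ioc (0:ℝ) 1 ∩ {u | esStep G S u = S'}) := by
          rw [Real.volume_singleton, zero_add]
  rw [hIoc]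
  have hsplit : Set.Ioc (0:ℝ) 1 ∩ {u | esStep G S u = S'}
      = (Set.Ioc (0:ℝ) (1/2) ∩ {u | esStep G S u = S'})
        ∪ (Set.Ioc (1/2:ℝ) 1 ∩ {u | esStep G S u = S'}) := by
    rw [← Set.union_inter_distrib_right, Set.Ioc_union_Ioc_eq_Ioc (by norm_num) (by norm_num)]
  rw [hsplit, measure_union ?hd ((measurableSet_Ioc).inter hB)]
  · rw [ENNReal.toReal_add]
    · exact ne_top_of_le_ne_top meas_J1_ne_top (measure_mono Set.inter_subset_left)
    · exact ne_top_of_le_ne_top meas_J2_ne_top (measure_mono Set.inter_subset_left)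
  case hd =>
    exact Set.disjoint_of_subset Set.inter_subset_left Set.inter_subset_left
      (Set.Ioc_disjoint_Ioc_of_le le_rfl)

lemma sum_KJ1 (S : Finset V) : ∑ S', KJ G (Set.Ioc 0 (1/2)) S S' = 1/2 := by
  rw [sum_KJ _ measurableSet_Ioc meas_J1_ne_top, Real.volume_Ioc]
  rw [ENNReal.toReal_ofReal (by norm_num)]
  norm_num

lemma sum_KJ2 (S : Finset V) : ∑ S', KJ G (Set.Ioc (1/2) 1) S S' = 1/2 := by
  rw [sum_KJ _ measurableSet_Ioc meas_J2_ne_top, Real.volume_Ioc]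
  rw [ENNReal.toReal_ofReal (by norm_num)]
  norm_num

lemma sum_KJ1_vol (S : Finset V) :
    ∑ S', KJ G (Set.Ioc 0 (1/2)) S S' * vol G S' = (vol G S + bdry G S)/2 := by
  rw [sum_KJ_vol _ measurableSet_Ioc meas_J1_ne_top]
  have hval : ∀ y, (G.degree y : ℝ)
      * (MeasureTheory.volume {u : ℝ | u ∈ Set.Ioc (0:ℝ) (1/2) ∧ u ≤ pset G y S}).toReal
      = if y ∈ S then (G.degree y : ℝ)/2 else ((S.filter (G.Adj y)).card : ℝ)/2 := by
    intro y
    by_cases h : y ∈ S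
    · rw [if_pos h, measJ1_big (half_le_pset y S h)]
      ring
    · rw [if_neg h, measJ1_small (pset_nonneg y S) (pset_le_half y S h)]
      exact deg_mul_pset_of_not_mem h
  rw [Finset.sum_congr rfl fun y _ => hval y, ← Finset.sum_add_sum_compl S]
  rw [Finset.sum_congr rfl fun y hy => if_pos hy,
    Finset.sum_congr rfl fun y hy => if_neg (Finset.mem_compl.mp hy)]
  rw [← Finset.sum_div, ← Finset.sum_div, ← bdry_eq_sum_compl]
  have : vol G S = ∑ x ∈ S, (G.degree x : ℝ) := rfl
  rw [← this]
  ring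

lemma sum_KJ2_vol (S : Finset V) :
    ∑ S', KJ G (Set.Ioc (1/2) 1) S S' * vol G S' = (vol G S - bdry G S)/2 := by
  rw [sum_KJ_vol _ measurableSet_Ioc meas_J2_ne_top]
  have hval : ∀ y, (G.degree y : ℝ)
      * (MeasureTheory.volume {u : ℝ | u ∈ Set.Ioc (1/2:ℝ) 1 ∧ u ≤ pset G y S}).toReal
      = if y ∈ S then ((S.filter (G.Adj y)).card : ℝ)/2 else 0 := by
    intro y
    by_cases h : y ∈ S
    · rw [if_pos h, measJ2_big (half_le_pset y S h) (pset_le_one y S)]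
      exact deg_mul_pset_sub_half h
    · rw [if_neg h, measJ2_small (pset_le_half y S h)]
      ring
  rw [Finset.sum_congr rfl fun y _ => hval y, ← Finset.sum_add_sum_compl S]
  rw [Finset.sum_congr rfl fun y hy => if_pos hy,
    Finset.sum_congr rfl fun y hy => if_neg (Finset.mem_compl.mp hy)]
  rw [Finset.sum_const_zero, add_zero, ← Finset.sum_div, sum_mem_filter_eq]

/-! ### The Morris–Peres gauge bound -/

lemma sqrt_combine {v b : ℝ} (hv : 0 < v) (hb : 0 ≤ b) (hbv : b ≤ v) :
    Real.sqrt ((v+b)/4) + Real.sqrt ((v-b)/4) ≤ Real.sqrt v * (1 - (b/v)^2/8) := by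
  set a := Real.sqrt ((v+b)/4) with ha
  set c := Real.sqrt ((v-b)/4) with hc
  set s := Real.sqrt v with hs
  have ha2 : a^2 = (v+b)/4 := Real.sq_sqrt (by linarith)
  have hc2 : c^2 = (v-b)/4 := Real.sq_sqrt (by linarith)
  have hs2 : s^2 = v := Real.sq_sqrt hv.le
  have ha0 : 0 ≤ a := Real.sqrt_nonneg _
  have hc0 : 0 ≤ c := Real.sqrt_nonneg _
  have hs0 : 0 < s := Real.sqrt_pos.mpr hv
  have hac : a * c ≤ (v - b^2/(2*v))/4 := by
    have h1 : a * c = Real.sqrt (((v+b)/4) * ((v-b)/4)) := (Real.sqrt_mul (by linarith) _).symm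
    rw [h1]
    have h2 : ((v+b)/4) * ((v-b)/4) ≤ ((v - b^2/(2*v))/4)^2 := by
      have hv' : v ≠ 0 := hv.ne'
      field_simp
      nlinarith [sq_nonneg b, sq_nonneg (b^2), hv.le]
    calc Real.sqrt (((v+b)/4) * ((v-b)/4)) ≤ Real.sqrt (((v - b^2/(2*v))/4)^2) :=
          Real.sqrt_le_sqrt h2
      _ = (v - b^2/(2*v))/4 := Real.sqrt_sq (by
          have : b^2/(2*v) ≤ v := by
            rw [div_le_iff₀ (by positivity)]
            nlinarith
          linarith)
  have hsum2 : (a + c)^2 ≤ v - b^2/(4*v) := by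
    have : (a+c)^2 = a^2 + c^2 + 2*(a*c) := by ring
    rw [this, ha2, hc2]
    have : b^2/(4*v) = (b^2/(2*v))/2 := by ring
    rw [this]
    linarith
  have hR0 : 0 ≤ Real.sqrt v * (1 - (b/v)^2/8) := by
    have : (b/v)^2 ≤ 1 := by
      rw [sq_le_one_iff_abs_le_one, abs_le]
      constructor
      · have : 0 ≤ b/v := by positivity
        linarith
      · rw [div_le_one hv]; exact hbv
    have h8 : (b/v)^2/8 ≤ 1 := by linarith
    have := Real.sqrt_nonneg v
    nlinarith
  have hR2 : v - b^2/(4*v) ≤ (Real.sqrt v * (1 - (b/v)^2/8))^2 := by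
    rw [mul_pow, Real.sq_sqrt hv.le]
    have hv' : v ≠ 0 := hv.ne'
    have expand : v * (1 - (b/v)^2/8)^2 = v - b^2/(4*v) + b^4/(64*v^3) := by
      field_simp
      ring
    rw [expand]
    have : 0 ≤ b^4/(64*v^3) := by positivity
    linarith
  calc a + c = Real.sqrt ((a+c)^2) := (Real.sqrt_sq (by linarith)).symm
    _ ≤ Real.sqrt ((Real.sqrt v * (1 - (b/v)^2/8))^2) :=
        Real.sqrt_le_sqrt (le_trans hsum2 hR2)
    _ = Real.sqrt v * (1 - (b/v)^2/8) := Real.sqrt_sq hR0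

lemma sum_Kk_sqrt {S : Finset V} (hv : 0 < vol G S) :
    ∑ S', Kk G S S' * Real.sqrt (vol G S')
      ≤ Real.sqrt (vol G S) * (1 - (phiCond G S)^2/8) := by
  have hb0 : 0 ≤ bdry G S := bdry_nonneg S
  have hbv : bdry G S ≤ vol G S := bdry_le_vol S
  have hsplit : ∑ S', Kk G S S' * Real.sqrt (vol G S')
      = (∑ S', KJ G (Set.Ioc 0 (1/2)) S S' * Real.sqrt (vol G S'))
        + ∑ S', KJ G (Set.Ioc (1/2) 1) S S' * Real.sqrt (vol G S') := by
    rw [← Finset.sum_add_distrib]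
    exact Finset.sum_congr rfl fun S' _ => by rw [Kk_split, add_mul]
  have key : ∀ (J : Set ℝ), MeasurableSet J → MeasureTheory.volume J ≠ ⊤ →
      ∀ (c : ℝ), 0 ≤ c →
      (∑ S', KJ G J S S' = 1/2) → (∑ S', KJ G J S S' * vol G S' = c) →
      ∑ S', KJ G J S S' * Real.sqrt (vol G S') ≤ Real.sqrt (c/2) := by
    intro J hJ hJf c hc hrow hvolsum
    have hCS : (∑ S', KJ G J S S' * Real.sqrt (vol G S'))^2
        ≤ (∑ S', KJ G J S S') * ∑ S', KJ G J S S' * vol G S' := by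
      refine Finset.sum_sq_le_sum_mul_sum_of_sq_eq_mul Finset.univ
        (fun S' _ => KJ_nonneg J S S')
        (fun S' _ => mul_nonneg (KJ_nonneg J S S') (vol_nonneg S')) ?_
      intro S' _
      rw [mul_pow, Real.sq_sqrt (vol_nonneg S')]
      ring
    rw [hrow, hvolsum] at hCS
    have h0 : 0 ≤ ∑ S', KJ G J S S' * Real.sqrt (vol G S') :=
      Finset.sum_nonneg fun S' _ => mul_nonneg (KJ_nonneg J S S') (Real.sqrt_nonneg _)
    calc ∑ S', KJ G J S S' * Real.sqrt (vol G S')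
        = Real.sqrt ((∑ S', KJ G J S S' * Real.sqrt (vol G S'))^2) :=
          (Real.sqrt_sq h0).symm
      _ ≤ Real.sqrt (c/2) := Real.sqrt_le_sqrt (by linarith)
  have h1 := key _ measurableSet_Ioc meas_J1_ne_top ((vol G S + bdry G S)/2) (by linarith)
    (sum_KJ1 S) (sum_KJ1_vol S)
  have h2 := key _ measurableSet_Ioc meas_J2_ne_top ((vol G S - bdry G S)/2) (by linarith)
    (sum_KJ2 S) (sum_KJ2_vol S)
  have e1 : (vol G S + bdry G S)/2/2 = (vol G S + bdry G S)/4 := by ring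
  have e2 : (vol G S - bdry G S)/2/2 = (vol G S - bdry G S)/4 := by ring
  rw [e1] at h1
  rw [e2] at h2
  have := sqrt_combine hv hb0 hbv
  unfold phiCond
  rw [hsplit]
  linarith

/-! ### The logarithmic drift bound -/

lemma sum_Kk_vol_log (S : Finset V) :
    vol G S * Real.log (vol G S) + vol G S * (phiCond G S)^2/4
      ≤ ∑ S', Kk G S S' * (vol G S' * Real.log (vol G S')) := by
  rcases eq_or_lt_of_le (vol_nonneg (G := G) S) with hv | hv
  · have hz : ∀ S' ∈ Finset.univ, Kk G S S' * (vol G S' * Real.log (vol G S')) = 0 := by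
      intro S' _
      have := Kk_mul_vol_eq_zero hv.symm S'
      rw [← mul_assoc, this, zero_mul]
    rw [Finset.sum_eq_zero hz, ← hv]
    simp
  · -- positive volume: Jensen
    have hv' := hv
    set v := vol G S with hvdef
    set t := Finset.univ.filter (fun S' : Finset V => 0 < vol G S') with ht
    have hextend : ∀ (f : Finset V → ℝ), (∀ S', vol G S' = 0 → f S' = 0) →
        ∑ S' ∈ t, f S' = ∑ S', f S' := by
      intro f hf
      refine Finset.sum_subset (Finset.filter_subset _ _) fun S' _ hS' => ?_
      rw [ht, Finset.mem_filter] at hS'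
      push_neg at hS'
      have : vol G S' = 0 := le_antisymm (hS' (Finset.mem_univ S')) (vol_nonneg S')
      exact hf S' this
    have hmemt : ∀ S' ∈ t, 0 < vol G S' := by
      intro S' hS'
      rw [ht, Finset.mem_filter] at hS'
      exact hS'.2
    have hw0 : ∀ S' ∈ t, 0 ≤ Kk G S S' * vol G S' / v := fun S' _ =>
      div_nonneg (mul_nonneg (Kk_nonneg S S') (vol_nonneg S')) hv.le
    have hw1 : ∑ S' ∈ t, Kk G S S' * vol G S' / v = 1 := by
      rw [hextend _ (fun S' h => by rw [h, mul_zero, zero_div])]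
      rw [← Finset.sum_div, sum_Kk_vol S, div_self hv.ne']
    have hqmem : ∀ S' ∈ t, Real.sqrt (v / vol G S') ∈ Set.Ioi (0:ℝ) := fun S' hS' =>
      Real.sqrt_pos.mpr (div_pos hv (hmemt S' hS'))
    have jensen := (strictConcaveOn_log_Ioi.concaveOn).le_map_sum
      (w := fun S' => Kk G S S' * vol G S' / v)
      (p := fun S' => Real.sqrt (v / vol G S')) hw0 hw1 hqmem
    simp only [smul_eq_mul] at jensen
    -- the inner expectation
    have hterm : ∀ S' ∈ t, Kk G S S' * vol G S' / v * Real.sqrt (v / vol G S')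
        = Kk G S S' * Real.sqrt (vol G S') / Real.sqrt v := by
      intro S' hS'
      have hvS' := hmemt S' hS'
      rw [Real.sqrt_div hv.le]
      have h1 : vol G S' = Real.sqrt (vol G S') * Real.sqrt (vol G S') :=
        (Real.mul_self_sqrt hvS'.le).symm
      have hsv : Real.sqrt v ≠ 0 := ne_of_gt (Real.sqrt_pos.mpr hv)
      have hsv' : Real.sqrt (vol G S') ≠ 0 := ne_of_gt (Real.sqrt_pos.mpr hvS')
      have h2 : v = Real.sqrt v * Real.sqrt v := (Real.mul_self_sqrt hv.le).symm
      field_simp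
      rw [Real.sq_sqrt hv.le, Real.sq_sqrt hvS'.le]
      ring
    have hE : ∑ S' ∈ t, Kk G S S' * vol G S' / v * Real.sqrt (v / vol G S')
        = (∑ S', Kk G S S' * Real.sqrt (vol G S')) / Real.sqrt v := by
      rw [Finset.sum_congr rfl hterm]
      rw [hextend _ (fun S' h => by rw [h, Real.sqrt_zero, mul_zero, zero_div])]
      rw [Finset.sum_div]
    -- bound on the expectation
    have hsvpos : 0 < Real.sqrt v := Real.sqrt_pos.mpr hv
    have hElt : ∑ S' ∈ t, Kk G S S' * vol G S' / v * Real.sqrt (v / vol G S')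
        ≤ 1 - (phiCond G S)^2/8 := by
      rw [hE, div_le_iff₀ hsvpos]
      calc ∑ S', Kk G S S' * Real.sqrt (vol G S')
          ≤ Real.sqrt v * (1 - (phiCond G S)^2/8) := sum_Kk_sqrt hv
        _ = (1 - (phiCond G S)^2/8) * Real.sqrt v := mul_comm _ _
    have hEpos : 0 < ∑ S' ∈ t, Kk G S S' * vol G S' / v * Real.sqrt (v / vol G S') := by
      have hex : ∃ S' ∈ t, 0 < Kk G S S' * vol G S' / v := by
        by_contra hcon
        push_neg at hcon
        have : ∑ S' ∈ t, Kk G S S' * vol G S' / v ≤ 0 :=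
          Finset.sum_nonpos fun S' hS' => hcon S' hS'
        rw [hw1] at this
        linarith
      obtain ⟨S'₀, hS'₀, hpos⟩ := hex
      refine Finset.sum_pos' (fun S' hS' => mul_nonneg (hw0 S' hS') (Real.sqrt_nonneg _)) ?_
      exact ⟨S'₀, hS'₀, mul_pos hpos (hqmem S'₀ hS'₀)⟩
    have hphi0 : 0 ≤ phiCond G S := phiCond_nonneg S
    have hphi1 : phiCond G S ≤ 1 := phiCond_le_one S
    have hRpos : 0 < 1 - (phiCond G S)^2/8 := by nlinarith
    have hlog1 : Real.log (∑ S' ∈ t, Kk G S S' * vol G S' / v * Real.sqrt (v / vol G S'))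
        ≤ Real.log (1 - (phiCond G S)^2/8) := Real.log_le_log hEpos hElt
    have hlog2 : Real.log (1 - (phiCond G S)^2/8) ≤ -(phiCond G S)^2/8 := by
      have := Real.log_le_sub_one_of_pos hRpos
      linarith
    -- compute the LHS of Jensen
    have hlogq : ∀ S' ∈ t, Real.log (Real.sqrt (v / vol G S'))
        = (Real.log v - Real.log (vol G S'))/2 := by
      intro S' hS'
      rw [Real.log_sqrt (div_nonneg hv.le (vol_nonneg S')),
        Real.log_div hv.ne' (hmemt S' hS').ne']
    have hLHS : ∑ S' ∈ t, Kk G S S' * vol G S' / v * Real.log (Real.sqrt (v / vol G S'))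
        = Real.log v / 2
          - (∑ S', Kk G S S' * (vol G S' * Real.log (vol G S'))) / (2*v) := by
      have e1 : ∀ S' ∈ t, Kk G S S' * vol G S' / v * Real.log (Real.sqrt (v / vol G S'))
          = Kk G S S' * vol G S' / v * Real.log v / 2
            - Kk G S S' * (vol G S' * Real.log (vol G S')) / (2*v) := by
        intro S' hS'
        rw [hlogq S' hS']
        field_simp
      rw [Finset.sum_congr rfl e1, Finset.sum_sub_distrib]
      congr 1
      · have : ∀ S' ∈ t, Kk G S S' * vol G S' / v * Real.log v / 2
            = (Kk G S S' * vol G S' / v) * (Real.log v / 2) := by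
          intro S' _; ring
        rw [Finset.sum_congr rfl this, ← Finset.sum_mul, hw1, one_mul]
      · rw [hextend _ (fun S' h => by rw [h, zero_mul, mul_zero, zero_div])]
        rw [Finset.sum_div]
    rw [hLHS] at jensen
    have hfinal : Real.log v / 2
        - (∑ S', Kk G S S' * (vol G S' * Real.log (vol G S'))) / (2*v)
        ≤ -(phiCond G S)^2/8 := le_trans jensen (le_trans hlog1 hlog2)
    set Z := ∑ S', Kk G S S' * (vol G S' * Real.log (vol G S')) with hZ
    have h2v : (0:ℝ) < 2*v := by linarith
    have hmul := mul_le_mul_of_nonneg_left hfinal h2v.le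
    have e2 : (2*v) * (Real.log v / 2 - Z/(2*v)) = v * Real.log v - Z := by
      field_simp
    have e3 : (2*v) * (-(phiCond G S)^2/8) = -(v * (phiCond G S)^2)/4 := by ring
    rw [e2, e3] at hmul
    have : v * (phiCond G S)^2/4 = (v * (phiCond G S)^2)/4 := by ring
    linarith

/-! ### Path-space machinery -/

def frz (T : ℕ) (w : Fin (T+1) → Finset V) : ℕ → Finset V :=
  fun n => w ⟨min n T, Nat.lt_succ_of_le (min_le_right n T)⟩

def appnd (s : ℕ → Finset V) (n : ℕ) (S' : Finset V) : ℕ → Finset V :=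
  fun i => if i ≤ n then s i else S'

def DepOn (f : (ℕ → Finset V) → ℝ) (n : ℕ) : Prop :=
  ∀ s s', (∀ i ≤ n, s i = s' i) → f s = f s'

lemma DepOn.mono {f : (ℕ → Finset V) → ℝ} {m n : ℕ} (h : DepOn f m) (hmn : m ≤ n) :
    DepOn f n := fun s s' hag => h s s' fun i hi => hag i (le_trans hi hmn)

lemma frz_zero {T : ℕ} (w : Fin (T+1) → Finset V) : frz T w 0 = w 0 := by
  unfold frz
  congr 1

lemma frz_min {T : ℕ} (w : Fin (T+1) → Finset V) (n : ℕ) :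
    frz T w n = frz T w (min n T) := by
  unfold frz
  congr 1
  exact Fin.ext (by simp [min_assoc])

lemma frz_apply_ge {T : ℕ} (w : Fin (T+1) → Finset V) {n : ℕ} (h : T ≤ n) :
    frz T w n = frz T w T := by
  unfold frz
  congr 1
  exact Fin.ext (by simp [min_eq_right h])

variable {κ : Finset V → Finset V → ℝ} {S₀ : Finset V}

lemma EpathN_eq_sum (T : ℕ) (f : (ℕ → Finset V) → ℝ) :
    EpathN κ S₀ T f = ∑ w : Fin (T+1) → Finset V,
      if w 0 = S₀ then (∏ j : Fin T, κ (w j.castSucc) (w j.succ)) * f (frz T w) else 0 := rfl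

lemma EpathN_zero (f : (ℕ → Finset V) → ℝ) :
    EpathN κ S₀ 0 f = f (fun _ => S₀) := by
  rw [EpathN_eq_sum]
  have e : ∀ a : Finset V, ((Equiv.funUnique (Fin 1) (Finset V)).symm a) = fun _ => a :=
    fun a => rfl
  rw [← Equiv.sum_comp (Equiv.funUnique (Fin 1) (Finset V)).symm]
  have : ∀ a : Finset V,
      (if ((Equiv.funUnique (Fin 1) (Finset V)).symm a) 0 = S₀ then
        (∏ j : Fin 0, κ (((Equiv.funUnique (Fin 1) (Finset V)).symm a) j.castSucc)
          (((Equiv.funUnique (Fin 1) (Finset V)).symm a) j.succ)) *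
          f (frz 0 ((Equiv.funUnique (Fin 1) (Finset V)).symm a)) else 0)
      = if a = S₀ then f (fun _ => a) else 0 := by
    intro a
    rw [e a]
    simp only [Fin.prod_univ_zero, one_mul]
    have : frz 0 (fun _ => a) = fun _ => a := by funext i; rfl
    rw [this]
  rw [Finset.sum_congr rfl fun a _ => this a]
  rw [Finset.sum_ite_eq' Finset.univ S₀ (fun a => f (fun _ => a))]
  rw [if_pos (Finset.mem_univ S₀)]

lemma EpathN_succ (n : ℕ) (f : (ℕ → Finset V) → ℝ) :
    EpathN κ S₀ (n+1) f
      = EpathN κ S₀ n (fun s => ∑ S', κ (s n) S' * f (appnd s n S')) := by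
  rw [EpathN_eq_sum, EpathN_eq_sum]
  have key : ∀ (w' : Fin (n+1) → Finset V) (S' : Finset V),
      (if (Fin.snoc w' S' : Fin (n+2) → Finset V) 0 = S₀ then
        (∏ j : Fin (n+1), κ ((Fin.snoc w' S' : Fin (n+2) → Finset V) j.castSucc)
          ((Fin.snoc w' S' : Fin (n+2) → Finset V) j.succ)) *
          f (frz (n+1) (Fin.snoc w' S')) else 0)
      = if w' 0 = S₀ then
          ((∏ j : Fin n, κ (w' j.castSucc) (w' j.succ)) * κ (frz n w' n) S') *
            f (appnd (frz n w') n S') else 0 := by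
    intro w' S'
    have h0 : (Fin.snoc w' S' : Fin (n+2) → Finset V) 0 = w' 0 := by
      have : (0 : Fin (n+2)) = Fin.castSucc (0 : Fin (n+1)) := rfl
      rw [this, Fin.snoc_castSucc]
    have hprod : (∏ j : Fin (n+1), κ ((Fin.snoc w' S' : Fin (n+2) → Finset V) j.castSucc)
          ((Fin.snoc w' S' : Fin (n+2) → Finset V) j.succ))
        = (∏ j : Fin n, κ (w' j.castSucc) (w' j.succ)) * κ (w' (Fin.last n)) S' := by
      rw [Fin.prod_univ_castSucc]
      congr 1
      · refine Finset.prod_congr rfl fun j _ => ?_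
        rw [Fin.succ_castSucc, Fin.snoc_castSucc, Fin.snoc_castSucc]
      · rw [Fin.succ_last, Fin.snoc_castSucc, Fin.snoc_last]
    have hfrz : frz (n+1) (Fin.snoc w' S') = appnd (frz n w') n S' := by
      funext i
      unfold frz appnd
      by_cases hi : i ≤ n
      · rw [if_pos hi]
        have h1 : (⟨min i (n+1), Nat.lt_succ_of_le (min_le_right i (n+1))⟩ : Fin (n+2))
            = Fin.castSucc ⟨min i n, Nat.lt_succ_of_le (min_le_right i n)⟩ := by
          apply Fin.ext
          simp [min_eq_left hi, min_eq_left (le_trans hi (Nat.le_succ n))]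
        rw [h1, Fin.snoc_castSucc]
      · push_neg at hi
        have h1 : (⟨min i (n+1), Nat.lt_succ_of_le (min_le_right i (n+1))⟩ : Fin (n+2))
            = Fin.last (n+1) := by
          apply Fin.ext
          simp [min_eq_right (Nat.succ_le_of_lt hi)]
        rw [if_neg (not_le.mpr hi), h1, Fin.snoc_last]
    have hlast : frz n w' n = w' (Fin.last n) := by
      unfold frz
      congr 1
      exact Fin.ext (by simp)
    rw [h0, hprod, hfrz, hlast]
  calc ∑ w : Fin (n+2) → Finset V,
      (if w 0 = S₀ then (∏ j : Fin (n+1), κ (w j.castSucc) (w j.succ)) * f (frz (n+1) w)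
        else 0)
      = ∑ p : Finset V × (Fin (n+1) → Finset V),
          (if (Fin.snocEquiv (fun _ => Finset V) p) 0 = S₀ then
            (∏ j : Fin (n+1), κ ((Fin.snocEquiv (fun _ => Finset V) p) j.castSucc)
              ((Fin.snocEquiv (fun _ => Finset V) p) j.succ)) *
              f (frz (n+1) (Fin.snocEquiv (fun _ => Finset V) p)) else 0) := by
        exact (Fintype.sum_equiv (Fin.snocEquiv (fun _ => Finset V)) _ _ fun p => rfl).symm
    _ = ∑ S' : Finset V, ∑ w' : Fin (n+1) → Finset V,
          (if w' 0 = S₀ then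
            ((∏ j : Fin n, κ (w' j.castSucc) (w' j.succ)) * κ (frz n w' n) S') *
              f (appnd (frz n w') n S') else 0) := by
        rw [Fintype.sum_prod_type]
        refine Finset.sum_congr rfl fun S' _ => Finset.sum_congr rfl fun w' _ => ?_
        have : Fin.snocEquiv (fun _ => Finset V) (S', w') = Fin.snoc w' S' := rfl
        rw [this, key]
    _ = ∑ w' : Fin (n+1) → Finset V,
          (if w' 0 = S₀ then (∏ j : Fin n, κ (w' j.castSucc) (w' j.succ)) *
            (∑ S', κ ((frz n w') n) S' * f (appnd (frz n w') n S')) else 0) := by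
        rw [Finset.sum_comm]
        refine Finset.sum_congr rfl fun w' _ => ?_
        by_cases h : w' 0 = S₀
        · simp only [if_pos h, Finset.mul_sum]
          exact Finset.sum_congr rfl fun S' _ => by ring
        · simp [h]

lemma EpathN_congr' {T : ℕ} {f g : (ℕ → Finset V) → ℝ}
    (h : ∀ s, s 0 = S₀ → (∀ n, s n = s (min n T)) → f s = g s) :
    EpathN κ S₀ T f = EpathN κ S₀ T g := by
  rw [EpathN_eq_sum, EpathN_eq_sum]
  refine Finset.sum_congr rfl fun w _ => ?_
  by_cases hw : w 0 = S₀
  · rw [if_pos hw, if_pos hw,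
      h (frz T w) (by rw [frz_zero, hw]) (fun n => frz_min w n)]
  · rw [if_neg hw, if_neg hw]

lemma EpathN_mono (hpos : ∀ S S', 0 ≤ κ S S') {T : ℕ} {f g : (ℕ → Finset V) → ℝ}
    (h : ∀ s, s 0 = S₀ → (∀ n, s n = s (min n T)) → f s ≤ g s) :
    EpathN κ S₀ T f ≤ EpathN κ S₀ T g := by
  rw [EpathN_eq_sum, EpathN_eq_sum]
  refine Finset.sum_le_sum fun w _ => ?_
  by_cases hw : w 0 = S₀
  · rw [if_pos hw, if_pos hw]
    refine mul_le_mul_of_nonneg_left ?_ (Finset.prod_nonneg fun j _ => hpos _ _)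
    exact h (frz T w) (by rw [frz_zero, hw]) (fun n => frz_min w n)
  · rw [if_neg hw, if_neg hw]

lemma EpathN_nonneg (hpos : ∀ S S', 0 ≤ κ S S') {T : ℕ} {f : (ℕ → Finset V) → ℝ}
    (h : ∀ s, 0 ≤ f s) : 0 ≤ EpathN κ S₀ T f := by
  rw [EpathN_eq_sum]
  refine Finset.sum_nonneg fun w _ => ?_
  by_cases hw : w 0 = S₀
  · rw [if_pos hw]
    exact mul_nonneg (Finset.prod_nonneg fun j _ => hpos _ _) (h _)
  · rw [if_neg hw]

lemma EpathN_add {T : ℕ} (f g : (ℕ → Finset V) → ℝ) :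
    EpathN κ S₀ T (fun s => f s + g s) = EpathN κ S₀ T f + EpathN κ S₀ T g := by
  rw [EpathN_eq_sum, EpathN_eq_sum, EpathN_eq_sum, ← Finset.sum_add_distrib]
  refine Finset.sum_congr rfl fun w _ => ?_
  by_cases hw : w 0 = S₀
  · rw [if_pos hw, if_pos hw, if_pos hw, mul_add]
  · rw [if_neg hw, if_neg hw, if_neg hw, add_zero]

lemma EpathN_const_mul {T : ℕ} (c : ℝ) (f : (ℕ → Finset V) → ℝ) :
    EpathN κ S₀ T (fun s => c * f s) = c * EpathN κ S₀ T f := by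
  rw [EpathN_eq_sum, EpathN_eq_sum, Finset.mul_sum]
  refine Finset.sum_congr rfl fun w _ => ?_
  by_cases hw : w 0 = S₀
  · rw [if_pos hw, if_pos hw]; ring
  · rw [if_neg hw, if_neg hw, mul_zero]

lemma EpathN_finsum {T : ℕ} {ι : Type*} (r : Finset ι) (f : ι → (ℕ → Finset V) → ℝ) :
    EpathN κ S₀ T (fun s => ∑ j ∈ r, f j s) = ∑ j ∈ r, EpathN κ S₀ T (f j) := by
  simp only [EpathN_eq_sum]
  rw [Finset.sum_comm]
  refine Finset.sum_congr rfl fun w _ => ?_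
  by_cases hw : w 0 = S₀
  · simp only [if_pos hw, Finset.mul_sum]
  · simp only [if_neg hw, Finset.sum_const_zero]

lemma EpathN_const (hrow : ∀ S, ∑ S', κ S S' = 1) {T : ℕ} (c : ℝ) :
    EpathN κ S₀ T (fun _ => c) = c := by
  induction T with
  | zero => rw [EpathN_zero]
  | succ n ih =>
    rw [EpathN_succ]
    calc EpathN κ S₀ n (fun s => ∑ S', κ (s n) S' * c)
        = EpathN κ S₀ n (fun _ => c) := by
          refine EpathN_congr' fun s _ _ => ?_
          rw [← Finset.sum_mul, hrow, one_mul]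
      _ = c := ih

lemma EpathN_stab (hrow : ∀ S, ∑ S', κ S S' = 1) {T : ℕ} {f : (ℕ → Finset V) → ℝ}
    (hf : DepOn f T) :
    EpathN κ S₀ (T+1) f = EpathN κ S₀ T f := by
  rw [EpathN_succ]
  refine EpathN_congr' fun s _ _ => ?_
  have : ∀ S' ∈ Finset.univ, κ (s T) S' * f (appnd s T S') = κ (s T) S' * f s := by
    intro S' _
    congr 1
    refine hf _ _ fun i hi => ?_
    unfold appnd
    rw [if_pos hi]
  rw [Finset.sum_congr rfl this, ← Finset.sum_mul, hrow, one_mul]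

lemma EpathN_tower (hrow : ∀ S, ∑ S', κ S S' = 1) {j T : ℕ} (hj : j < T)
    (A : (ℕ → Finset V) → ℝ) (hA : DepOn A j) (B : Finset V → Finset V → ℝ) :
    EpathN κ S₀ T (fun s => A s * B (s j) (s (j+1)))
      = EpathN κ S₀ T (fun s => A s * ∑ S', κ (s j) S' * B (s j) S') := by
  obtain ⟨d, rfl⟩ : ∃ d, T = (j+1)+d := ⟨T - (j+1), by omega⟩
  clear hj
  induction d with
  | zero =>
    rw [EpathN_succ, EpathN_succ]
    refine EpathN_congr' fun s _ _ => ?_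
    have happ : ∀ S', appnd s j S' j = s j := fun S' => by unfold appnd; rw [if_pos le_rfl]
    have happ' : ∀ S', appnd s j S' (j+1) = S' := fun S' => by
      unfold appnd; rw [if_neg (by omega)]
    have hAa : ∀ S', A (appnd s j S') = A s := fun S' =>
      hA _ _ fun i hi => by unfold appnd; rw [if_pos hi]
    have step1 : ∑ S', κ (s j) S' * (A (appnd s j S') * B (appnd s j S' j) (appnd s j S' (j+1)))
        = A s * ∑ S', κ (s j) S' * B (s j) S' := by
      have h1 : ∀ S' ∈ Finset.univ,
          κ (s j) S' * (A (appnd s j S') * B (appnd s j S' j) (appnd s j S' (j+1)))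
          = A s * (κ (s j) S' * B (s j) S') := by
        intro S' _
        rw [hAa S', happ S', happ' S']
        ring
      rw [Finset.sum_congr rfl h1, ← Finset.mul_sum]
    have step2 : ∑ S', κ (s j) S' * (A (appnd s j S')
          * ∑ S'', κ (appnd s j S' j) S'' * B (appnd s j S' j) S'')
        = A s * ∑ S'', κ (s j) S'' * B (s j) S'' := by
      have h1 : ∀ S' ∈ Finset.univ, κ (s j) S' * (A (appnd s j S')
            * ∑ S'', κ (appnd s j S' j) S'' * B (appnd s j S' j) S'')
          = κ (s j) S' * (A s * ∑ S'', κ (s j) S'' * B (s j) S'') := by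
        intro S' _
        rw [hAa S', happ S']
      rw [Finset.sum_congr rfl h1, ← Finset.sum_mul, hrow, one_mul]
    rw [step1, step2]
  | succ d ih =>
    have hdep : ∀ (C : Finset V → Finset V → ℝ), DepOn (fun s => A s * C (s j) (s (j+1)))
        ((j+1)+d) := by
      intro C s s' hag
      have h1 : A s = A s' := hA s s' fun i hi => hag i (by omega)
      simp only []
      rw [h1, hag j (by omega), hag (j+1) (by omega)]
    have e1 : (j+1)+(d+1) = ((j+1)+d)+1 := by omega
    rw [e1, EpathN_stab hrow (hdep B),
      EpathN_stab hrow (hdep (fun S S' => ∑ S'', κ S S'' * B S S''))]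
    exact ih

/-! ### Relating the volume-biased chain to the plain ESP chain -/

lemma costPath_nonneg (s : ℕ → Finset V) (t : ℕ) : 0 ≤ costPath G s t := by
  unfold costPath
  refine add_nonneg (vol_nonneg _) (Finset.sum_nonneg fun j _ =>
    add_nonneg (vol_nonneg _) (bdry_nonneg _))

lemma costPath_congr {s s' : ℕ → Finset V} {t : ℕ} (h : ∀ i ≤ t, s i = s' i) :
    costPath G s t = costPath G s' t := by
  unfold costPath
  rw [h 0 (Nat.zero_le t)]
  congr 1
  refine Finset.sum_congr rfl fun j hj => ?_
  rw [Finset.mem_range] at hj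
  rw [h (j+1) (by omega), h j (by omega)]

lemma prod_Khat_eq {T : ℕ} (w : Fin (T+1) → Finset V) (hall : ∀ i, 0 < vol G (w i)) :
    ∏ j : Fin T, Khat G (w j.castSucc) (w j.succ)
      = vol G (w (Fin.last T)) / vol G (w 0)
        * ∏ j : Fin T, Kk G (w j.castSucc) (w j.succ) := by
  induction T with
  | zero =>
    simp only [Fin.prod_univ_zero, mul_one]
    have : Fin.last 0 = 0 := rfl
    rw [this, div_self (hall 0).ne']
  | succ T ih =>
    have hcs : ∀ (j : Fin T), ((j.castSucc : Fin (T+1)).succ : Fin (T+2))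
        = ((j.succ : Fin (T+1)).castSucc : Fin (T+2)) := fun j => Fin.ext (by simp)
    set w' : Fin (T+1) → Finset V := fun i => w i.castSucc with hw'
    have hall' : ∀ i, 0 < vol G (w' i) := fun i => hall _
    have hKhat : ∀ (j : Fin T), Khat G (w (j.castSucc : Fin (T+1)).castSucc)
        (w (j.castSucc : Fin (T+1)).succ) = Khat G (w' j.castSucc) (w' j.succ) := by
      intro j
      rw [hcs j]
    have hKk : ∀ (j : Fin T), Kk G (w (j.castSucc : Fin (T+1)).castSucc)
        (w (j.castSucc : Fin (T+1)).succ) = Kk G (w' j.castSucc) (w' j.succ) := by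
      intro j
      rw [hcs j]
    rw [Fin.prod_univ_castSucc (fun j : Fin (T+1) => Khat G (w j.castSucc) (w j.succ)),
      Fin.prod_univ_castSucc (fun j : Fin (T+1) => Kk G (w j.castSucc) (w j.succ))]
    rw [Finset.prod_congr rfl fun j _ => hKhat j, Finset.prod_congr rfl fun j _ => hKk j]
    rw [ih w' hall']
    have hlast : Khat G (w (Fin.last T).castSucc) (w (Fin.last T).succ)
        = vol G (w (Fin.last T).succ) / vol G (w (Fin.last T).castSucc)
          * Kk G (w (Fin.last T).castSucc) (w (Fin.last T).succ) := rfl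
    rw [hlast]
    have h1 : w' (Fin.last T) = w (Fin.last T).castSucc := rfl
    have h2 : w' 0 = w 0 := by
      rw [hw']
      congr 1
    have h3 : (Fin.last T).succ = Fin.last (T+1) := Fin.succ_last T
    rw [h1, h2, h3]
    have ha : vol G (w (Fin.last T).castSucc) ≠ 0 := (hall _).ne'
    have hc : vol G (w 0) ≠ 0 := (hall 0).ne'
    field_simp

lemma EpathN_Khat_eq (hm0 : 0 < vol G S₀) (T : ℕ) (q : (ℕ → Finset V) → ℝ) :
    EpathN (Khat G) S₀ T q
      = (1 / vol G S₀) * EpathN (Kk G) S₀ T (fun s => vol G (s T) * q s) := by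
  rw [EpathN_eq_sum, EpathN_eq_sum, Finset.mul_sum]
  refine Finset.sum_congr rfl fun w _ => ?_
  by_cases hw : w 0 = S₀
  · rw [if_pos hw, if_pos hw]
    have hfl : frz T w T = w (Fin.last T) := by
      unfold frz
      congr 1
      exact Fin.ext (by simp)
    by_cases hall : ∀ i, 0 < vol G (w i)
    · rw [prod_Khat_eq w hall, hfl, hw]
      field_simp
    · push_neg at hall
      obtain ⟨i₀, hi₀⟩ := hall
      have hvi₀ : vol G (w i₀) = 0 := le_antisymm hi₀ (vol_nonneg _)
      have hi₀pos : 0 < i₀.val := by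
        rcases Nat.eq_zero_or_pos i₀.val with h | h
        · exfalso
          have : i₀ = 0 := Fin.ext h
          rw [this, hw] at hvi₀
          exact hm0.ne' hvi₀
        · exact h
      -- LHS is zero
      have hLHS : ∏ j : Fin T, Khat G (w j.castSucc) (w j.succ) = 0 := by
        have hjlt : i₀.val - 1 < T := by
          have := i₀.isLt
          omega
        refine Finset.prod_eq_zero (Finset.mem_univ (⟨i₀.val - 1, hjlt⟩ : Fin T)) ?_
        have hsucc : ((⟨i₀.val - 1, hjlt⟩ : Fin T)).succ = i₀ := Fin.ext (by simp; omega)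
        unfold Khat
        rw [hsucc, hvi₀, zero_div, zero_mul]
      rw [hLHS, zero_mul]
      -- RHS is zero
      by_cases hK : ∏ j : Fin T, Kk G (w j.castSucc) (w j.succ) = 0
      · rw [hK]
        ring
      · have hKne : ∀ j : Fin T, Kk G (w j.castSucc) (w j.succ) ≠ 0 := by
          intro j
          exact fun h => hK (Finset.prod_eq_zero (Finset.mem_univ j) h)
        have hprop : ∀ m : ℕ, ∀ hle : i₀.val + m ≤ T,
            vol G (w ⟨i₀.val + m, Nat.lt_succ_of_le hle⟩) = 0 := by
          intro m
          induction m with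
          | zero =>
            intro hle
            have : (⟨i₀.val + 0, Nat.lt_succ_of_le hle⟩ : Fin (T+1)) = i₀ := Fin.ext (by simp)
            rw [this]
            exact hvi₀
          | succ m ihm =>
            intro hle
            have hle' : i₀.val + m ≤ T := by omega
            have hprev := ihm hle'
            have hj : i₀.val + m < T := by omega
            have hfactor := hKne ⟨i₀.val + m, hj⟩
            have hcs : ((⟨i₀.val + m, hj⟩ : Fin T)).castSucc
                = (⟨i₀.val + m, Nat.lt_succ_of_le hle'⟩ : Fin (T+1)) := Fin.ext (by simp)
            have hsc : ((⟨i₀.val + m, hj⟩ : Fin T)).succ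
                = (⟨i₀.val + (m+1), Nat.lt_succ_of_le hle⟩ : Fin (T+1)) :=
              Fin.ext (by simp; omega)
            rw [hcs, hsc] at hfactor
            have := Kk_mul_vol_eq_zero hprev (w ⟨i₀.val + (m+1), Nat.lt_succ_of_le hle⟩)
            rcases mul_eq_zero.mp this with h | h
            · exact absurd h hfactor
            · exact h
        have hT0 : vol G (w (Fin.last T)) = 0 := by
          have hle0 : i₀.val + (T - i₀.val) ≤ T := by
            have := i₀.isLt
            omega
          have h1 := hprop (T - i₀.val) hle0
          have h2 : (⟨i₀.val + (T - i₀.val), Nat.lt_succ_of_le hle0⟩ : Fin (T+1))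
              = Fin.last T := by
            apply Fin.ext
            have := i₀.isLt
            simp
            omega
          rw [h2] at h1
          exact h1
        rw [hfl, hT0, zero_mul, mul_zero, mul_zero]
  · rw [if_neg hw, if_neg hw, mul_zero]

/-- Theorem 9: for the volume-biased evolving set process started from a nonempty set
`S₀`, a positive integer `T`, and any stopping time `τ` bounded by `T`,
`Ê_{S₀}[cost(S₀,…,S_τ)/μ(S_τ)] ≤ 1 + 4 √(T log μ(V))`. -/
theorem statement17 (G : SimpleGraph V) [DecidableRel G.Adj]
    (S₀ : Finset V) (hS₀ : S₀.Nonempty) (T : ℕ) (hT : 0 < T)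
    (τ : (ℕ → Finset V) → ℕ) (hstop : IsStopping τ) (hbd : ∀ s, τ s ≤ T) :
    EpathN (Khat G) S₀ T (fun s => costPath G s (τ s) / vol G (s (τ s))) ≤
      1 + 4 * Real.sqrt (T * Real.log (vol G Finset.univ)) := by
  have hsqrt_nonneg : 0 ≤ Real.sqrt (T * Real.log (vol G Finset.univ)) := Real.sqrt_nonneg _
  by_cases hm0 : 0 < vol G S₀
  swap
  · -- degenerate case: vol S₀ = 0
    have hv0 : vol G S₀ = 0 := le_antisymm (not_lt.mp hm0) (vol_nonneg S₀)
    have hzero : EpathN (Khat G) S₀ T (fun s => costPath G s (τ s) / vol G (s (τ s))) = 0 := by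
      rw [EpathN_eq_sum]
      refine Finset.sum_eq_zero fun w _ => ?_
      by_cases hw : w 0 = S₀
      · rw [if_pos hw]
        have hj0 : (0:ℕ) < T := hT
        have hfac : Khat G (w (⟨0, hj0⟩ : Fin T).castSucc) (w (⟨0, hj0⟩ : Fin T).succ) = 0 := by
          have hcs : ((⟨0, hj0⟩ : Fin T)).castSucc = (0 : Fin (T+1)) := Fin.ext (by simp)
          unfold Khat
          rw [hcs, hw, hv0, div_zero, zero_mul]
        have hp : (∏ j : Fin T, Khat G (w j.castSucc) (w j.succ)) = 0 :=
          Finset.prod_eq_zero (Finset.mem_univ (⟨0, hj0⟩ : Fin T)) hfac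
        rw [hp, zero_mul]
      · rw [if_neg hw]
    rw [hzero]
    positivity
  · -- main case
    have hrow : ∀ S : Finset V, ∑ S', Kk G S S' = 1 := fun S => sum_Kk S
    have hpos : ∀ S S' : Finset V, 0 ≤ Kk G S S' := fun S S' => Kk_nonneg S S'
    have hm1 : (1:ℝ) ≤ vol G S₀ := by
      have hnat : vol G S₀ = ((∑ x ∈ S₀, G.degree x : ℕ) : ℝ) := by
        unfold vol
        push_cast
        rfl
      rw [hnat] at hm0 ⊢
      have : 0 < ∑ x ∈ S₀, G.degree x := by exact_mod_cast hm0
      exact_mod_cast this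
    have hM1 : (1:ℝ) ≤ vol G Finset.univ := le_trans hm1 (vol_le_vol_univ S₀)
    have hlogM : 0 ≤ Real.log (vol G Finset.univ) := Real.log_nonneg hM1
    set M := vol G Finset.univ with hMdef
    -- Step 1: change of measure
    have hC1 : EpathN (Khat G) S₀ T (fun s => costPath G s (τ s) / vol G (s (τ s)))
        = (1 / vol G S₀) * EpathN (Kk G) S₀ T
            (fun s => vol G (s T) * (costPath G s (τ s) / vol G (s (τ s)))) :=
      EpathN_Khat_eq hm0 T _
    -- Step 2: optional stopping
    have hC2 : EpathN (Kk G) S₀ T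
          (fun s => vol G (s T) * (costPath G s (τ s) / vol G (s (τ s))))
        ≤ EpathN (Kk G) S₀ T (fun s => costPath G s (τ s)) := by
      set X : ℕ → (ℕ → Finset V) → ℝ := fun t s =>
        vol G (s (max (τ s) t)) * (costPath G s (τ s) / vol G (s (τ s))) with hXdef
      have hstep : ∀ t, t < T →
          EpathN (Kk G) S₀ T (X (t+1)) = EpathN (Kk G) S₀ T (X t) := by
        intro t ht
        have hptw : ∀ s : ℕ → Finset V, X (t+1) s = X t s
            + (if τ s ≤ t then costPath G s (τ s) / vol G (s (τ s)) else 0)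
              * (vol G (s (t+1)) - vol G (s t)) := by
          intro s
          simp only [hXdef]
          by_cases h : τ s ≤ t
          · rw [if_pos h, max_eq_right (le_trans h (Nat.le_succ t)), max_eq_right h]
            ring
          · rw [if_neg h, max_eq_left (by omega), max_eq_left (by omega)]
            ring
        have hAdep : DepOn (fun s => if τ s ≤ t then costPath G s (τ s) / vol G (s (τ s))
            else 0) t := by
          intro s s' hag
          simp only []
          by_cases h : τ s ≤ t
          · have hτ' : τ s' = τ s := hstop s s' (τ s) rfl fun i hi =>
              (hag i (le_trans hi h)).symm
            have hnum : costPath G s (τ s) = costPath G s' (τ s) :=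
              costPath_congr fun i hi => hag i (le_trans hi h)
            have hden : s (τ s) = s' (τ s) := hag (τ s) h
            rw [if_pos h, if_pos (show τ s' ≤ t by omega), hτ', hnum, hden]
          · have h' : ¬ τ s' ≤ t := by
              intro h'
              have := hstop s' s (τ s') rfl fun i hi => hag i (le_trans hi h')
              omega
            rw [if_neg h, if_neg h']
        have htower := EpathN_tower (S₀ := S₀) hrow ht
          (fun s => if τ s ≤ t then costPath G s (τ s) / vol G (s (τ s)) else 0) hAdep
          (fun S S' => vol G S' - vol G S)
        have hzero : ∀ s : ℕ → Finset V,
            (∑ S', Kk G (s t) S' * (vol G S' - vol G (s t))) = 0 := by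
          intro s
          have hdist : ∀ S' ∈ Finset.univ, Kk G (s t) S' * (vol G S' - vol G (s t))
              = Kk G (s t) S' * vol G S' - Kk G (s t) S' * vol G (s t) := fun S' _ => by ring
          rw [Finset.sum_congr rfl hdist, Finset.sum_sub_distrib, sum_Kk_vol,
            ← Finset.sum_mul, hrow, one_mul, sub_self]
        calc EpathN (Kk G) S₀ T (X (t+1))
            = EpathN (Kk G) S₀ T (fun s => X t s
                + (if τ s ≤ t then costPath G s (τ s) / vol G (s (τ s)) else 0)
                  * (vol G (s (t+1)) - vol G (s t))) := EpathN_congr' fun s _ _ => hptw s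
          _ = EpathN (Kk G) S₀ T (X t) + EpathN (Kk G) S₀ T
                (fun s => (if τ s ≤ t then costPath G s (τ s) / vol G (s (τ s)) else 0)
                  * (vol G (s (t+1)) - vol G (s t))) := EpathN_add _ _
          _ = EpathN (Kk G) S₀ T (X t) := by
              have hZ : EpathN (Kk G) S₀ T
                  (fun s => (if τ s ≤ t then costPath G s (τ s) / vol G (s (τ s)) else 0)
                    * ∑ S', Kk G (s t) S' * (vol G S' - vol G (s t))) = 0 := by
                rw [EpathN_congr' (g := fun _ => (0:ℝ)) (fun s _ _ => by
                  rw [hzero s, mul_zero]), EpathN_const hrow]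
              rw [htower, hZ]
              ring
      have hdown : ∀ t, t ≤ T → EpathN (Kk G) S₀ T (X t) = EpathN (Kk G) S₀ T (X 0) := by
        intro t
        induction t with
        | zero => intro _; rfl
        | succ t ih =>
          intro h
          rw [hstep t (by omega)]
          exact ih (by omega)
      have hXT : EpathN (Kk G) S₀ T
            (fun s => vol G (s T) * (costPath G s (τ s) / vol G (s (τ s))))
          = EpathN (Kk G) S₀ T (X T) :=
        EpathN_congr' fun s _ _ => by
          simp only [hXdef]
          rw [max_eq_right (hbd s)]
      have hX0 : EpathN (Kk G) S₀ T (X 0)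
          ≤ EpathN (Kk G) S₀ T (fun s => costPath G s (τ s)) := by
        refine EpathN_mono hpos fun s _ _ => ?_
        simp only [hXdef]
        rw [Nat.max_zero]
        by_cases h : vol G (s (τ s)) = 0
        · rw [h, div_zero, mul_zero]
          exact costPath_nonneg _ _
        · rw [mul_comm, div_mul_cancel₀ _ h]
      rw [hXT, hdown T le_rfl]
      exact hX0
    -- Step 3: expanding the cost
    have hC3 : EpathN (Kk G) S₀ T (fun s => costPath G s (τ s))
        ≤ vol G S₀ + 2 * ∑ j ∈ Finset.range T, EpathN (Kk G) S₀ T (fun s => bdry G (s j)) := by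
      have hptw : ∀ s : ℕ → Finset V, costPath G s (τ s)
          = vol G (s 0) + ∑ j ∈ Finset.range T,
              (if j < τ s then (1:ℝ) else 0)
                * (vol G (symmDiff (s (j+1)) (s j)) + bdry G (s j)) := by
        intro s
        unfold costPath
        congr 1
        have hfil : Finset.range (τ s) = (Finset.range T).filter (fun j => j < τ s) := by
          ext j
          simp only [Finset.mem_range, Finset.mem_filter]
          have := hbd s
          omega
        rw [hfil, Finset.sum_filter]
        refine Finset.sum_congr rfl fun j _ => ?_
        split <;> simp
      rw [EpathN_congr' (fun s _ _ => hptw s), EpathN_add, EpathN_finsum]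
      have h0 : EpathN (Kk G) S₀ T (fun s => vol G (s 0)) = vol G S₀ := by
        rw [EpathN_congr' (g := fun _ => vol G S₀) (fun s hs _ => by rw [hs]),
          EpathN_const hrow]
      rw [h0]
      have hj : ∀ j ∈ Finset.range T,
          EpathN (Kk G) S₀ T (fun s => (if j < τ s then (1:ℝ) else 0)
            * (vol G (symmDiff (s (j+1)) (s j)) + bdry G (s j)))
          ≤ 2 * EpathN (Kk G) S₀ T (fun s => bdry G (s j)) := by
        intro j hjm
        rw [Finset.mem_range] at hjm
        have hAdep : DepOn (fun s => if j < τ s then (1:ℝ) else 0) j := by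
          intro s s' hag
          simp only []
          by_cases h : j < τ s
          · have h' : j < τ s' := by
              by_contra hc
              push_neg at hc
              have := hstop s' s (τ s') rfl fun i hi => hag i (le_trans hi (by omega))
              omega
            rw [if_pos h, if_pos h']
          · push_neg at h
            have hτ' : τ s' = τ s := hstop s s' (τ s) rfl fun i hi =>
              (hag i (le_trans hi h)).symm
            rw [if_neg (by omega), if_neg (by omega)]
        have htower := EpathN_tower (S₀ := S₀) hrow hjm
          (fun s => if j < τ s then (1:ℝ) else 0) hAdep
          (fun S S' => vol G (symmDiff S' S) + bdry G S)
        rw [htower]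
        have hin : ∀ s : ℕ → Finset V,
            (∑ S', Kk G (s j) S' * (vol G (symmDiff S' (s j)) + bdry G (s j)))
              = 2 * bdry G (s j) := by
          intro s
          have hdist : ∀ S' ∈ Finset.univ,
              Kk G (s j) S' * (vol G (symmDiff S' (s j)) + bdry G (s j))
              = Kk G (s j) S' * vol G (symmDiff S' (s j)) + Kk G (s j) S' * bdry G (s j) :=
            fun S' _ => by ring
          rw [Finset.sum_congr rfl hdist, Finset.sum_add_distrib, sum_Kk_symmDiff,
            ← Finset.sum_mul, hrow, one_mul]
          ring
        calc EpathN (Kk G) S₀ T (fun s => (if j < τ s then (1:ℝ) else 0)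
              * ∑ S', Kk G (s j) S' * (vol G (symmDiff S' (s j)) + bdry G (s j)))
            = EpathN (Kk G) S₀ T (fun s => (if j < τ s then (1:ℝ) else 0)
                * (2 * bdry G (s j))) :=
              EpathN_congr' fun s _ _ => by
                show (if j < τ s then (1:ℝ) else 0)
                    * (∑ S', Kk G (s j) S' * (vol G (symmDiff S' (s j)) + bdry G (s j)))
                  = (if j < τ s then (1:ℝ) else 0) * (2 * bdry G (s j))
                rw [hin s]
          _ ≤ EpathN (Kk G) S₀ T (fun s => 2 * bdry G (s j)) := by
              refine EpathN_mono hpos fun s _ _ => ?_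
              have hb := bdry_nonneg (G := G) (s j)
              split
              · rw [one_mul]
              · rw [zero_mul]
                linarith
          _ = 2 * EpathN (Kk G) S₀ T (fun s => bdry G (s j)) := EpathN_const_mul _ _
      calc vol G S₀ + ∑ j ∈ Finset.range T,
            EpathN (Kk G) S₀ T (fun s => (if j < τ s then (1:ℝ) else 0)
              * (vol G (symmDiff (s (j+1)) (s j)) + bdry G (s j)))
          ≤ vol G S₀ + ∑ j ∈ Finset.range T,
              2 * EpathN (Kk G) S₀ T (fun s => bdry G (s j)) :=
            add_le_add_right (Finset.sum_le_sum hj) _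
        _ = vol G S₀ + 2 * ∑ j ∈ Finset.range T,
              EpathN (Kk G) S₀ T (fun s => bdry G (s j)) := by
            rw [Finset.mul_sum]
    -- martingale property
    have hmart : ∀ j, j ≤ T → EpathN (Kk G) S₀ T (fun s => vol G (s j)) = vol G S₀ := by
      intro j
      induction j with
      | zero =>
        intro _
        rw [EpathN_congr' (g := fun _ => vol G S₀) (fun s hs _ => by rw [hs]),
          EpathN_const hrow]
      | succ j ih =>
        intro hj
        have hjT : j < T := by omega
        have e1 : EpathN (Kk G) S₀ T (fun s => vol G (s (j+1)))
            = EpathN (Kk G) S₀ T (fun s => (1:ℝ) * vol G (s (j+1))) :=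
          EpathN_congr' fun s _ _ => by ring
        have e2 := EpathN_tower (S₀ := S₀) hrow hjT (fun _ => (1:ℝ))
          (fun _ _ _ => rfl) (fun _ S' => vol G S')
        rw [e1, e2, EpathN_congr' (g := fun s => vol G (s j)) (fun s _ _ => by
          rw [one_mul, sum_Kk_vol]), ih (by omega)]
    -- Cauchy-Schwarz per step
    have hCSj : ∀ j, j ≤ T → EpathN (Kk G) S₀ T (fun s => bdry G (s j))
        ≤ Real.sqrt (vol G S₀) * Real.sqrt (EpathN (Kk G) S₀ T
            (fun s => vol G (s j) * (phiCond G (s j))^2)) := by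
      intro j hj
      have heq : EpathN (Kk G) S₀ T (fun s => bdry G (s j))
          = EpathN (Kk G) S₀ T (fun s => vol G (s j) * phiCond G (s j)) :=
        EpathN_congr' fun s _ _ => bdry_eq_vol_mul_phi (s j)
      rw [heq]
      have e1 : EpathN (Kk G) S₀ T (fun s => vol G (s j) * phiCond G (s j))
          = ∑ w : Fin (T+1) → Finset V, (if w 0 = S₀ then
              (∏ i : Fin T, Kk G (w i.castSucc) (w i.succ))
                * (vol G (frz T w j) * phiCond G (frz T w j)) else 0) :=
        EpathN_eq_sum T _
      have e2 : EpathN (Kk G) S₀ T (fun s => vol G (s j))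
          = ∑ w : Fin (T+1) → Finset V, (if w 0 = S₀ then
              (∏ i : Fin T, Kk G (w i.castSucc) (w i.succ)) * vol G (frz T w j) else 0) :=
        EpathN_eq_sum T _
      have e3 : EpathN (Kk G) S₀ T (fun s => vol G (s j) * (phiCond G (s j))^2)
          = ∑ w : Fin (T+1) → Finset V, (if w 0 = S₀ then
              (∏ i : Fin T, Kk G (w i.castSucc) (w i.succ))
                * (vol G (frz T w j) * (phiCond G (frz T w j))^2) else 0) :=
        EpathN_eq_sum T _
      have hPr0 : ∀ w : Fin (T+1) → Finset V,
          0 ≤ ∏ i : Fin T, Kk G (w i.castSucc) (w i.succ) :=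
        fun w => Finset.prod_nonneg fun i _ => Kk_nonneg _ _
      have hCS : (∑ w : Fin (T+1) → Finset V, (if w 0 = S₀ then
              (∏ i : Fin T, Kk G (w i.castSucc) (w i.succ))
                * (vol G (frz T w j) * phiCond G (frz T w j)) else 0))^2
          ≤ (∑ w : Fin (T+1) → Finset V, (if w 0 = S₀ then
              (∏ i : Fin T, Kk G (w i.castSucc) (w i.succ)) * vol G (frz T w j) else 0))
            * ∑ w : Fin (T+1) → Finset V, (if w 0 = S₀ then
              (∏ i : Fin T, Kk G (w i.castSucc) (w i.succ))
                * (vol G (frz T w j) * (phiCond G (frz T w j))^2) else 0) := by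
        refine Finset.sum_sq_le_sum_mul_sum_of_sq_eq_mul Finset.univ ?_ ?_ ?_
        · intro w _
          by_cases hw : w 0 = S₀
          · rw [if_pos hw]
            exact mul_nonneg (hPr0 w) (vol_nonneg _)
          · rw [if_neg hw]
        · intro w _
          by_cases hw : w 0 = S₀
          · rw [if_pos hw]
            exact mul_nonneg (hPr0 w) (mul_nonneg (vol_nonneg _) (sq_nonneg _))
          · rw [if_neg hw]
        · intro w _
          by_cases hw : w 0 = S₀
          · rw [if_pos hw, if_pos hw, if_pos hw]
            ring
          · rw [if_neg hw, if_neg hw, if_neg hw]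
            ring
      have hsq : (EpathN (Kk G) S₀ T (fun s => vol G (s j) * phiCond G (s j)))^2
          ≤ vol G S₀ * EpathN (Kk G) S₀ T (fun s => vol G (s j) * (phiCond G (s j))^2) := by
        rw [e1]
        refine le_trans hCS ?_
        rw [← e2, ← e3, hmart j hj]
      have hnn : 0 ≤ EpathN (Kk G) S₀ T (fun s => vol G (s j) * phiCond G (s j)) :=
        EpathN_nonneg hpos fun s => mul_nonneg (vol_nonneg _) (phiCond_nonneg _)
      calc EpathN (Kk G) S₀ T (fun s => vol G (s j) * phiCond G (s j))
          = Real.sqrt ((EpathN (Kk G) S₀ T (fun s => vol G (s j) * phiCond G (s j)))^2) :=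
            (Real.sqrt_sq hnn).symm
        _ ≤ Real.sqrt (vol G S₀ * EpathN (Kk G) S₀ T
              (fun s => vol G (s j) * (phiCond G (s j))^2)) := Real.sqrt_le_sqrt hsq
        _ = Real.sqrt (vol G S₀) * Real.sqrt (EpathN (Kk G) S₀ T
              (fun s => vol G (s j) * (phiCond G (s j))^2)) :=
            Real.sqrt_mul (vol_nonneg _) _
    -- log-drift bound
    have hsumphi : ∑ j ∈ Finset.range T, EpathN (Kk G) S₀ T
          (fun s => vol G (s j) * (phiCond G (s j))^2)
        ≤ 4 * (vol G S₀ * Real.log M) := by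
      have hL : ∀ j, j < T →
          EpathN (Kk G) S₀ T (fun s => vol G (s j) * Real.log (vol G (s j)))
            + (1/4) * EpathN (Kk G) S₀ T (fun s => vol G (s j) * (phiCond G (s j))^2)
          ≤ EpathN (Kk G) S₀ T (fun s => vol G (s (j+1)) * Real.log (vol G (s (j+1)))) := by
        intro j hj
        have e1 : EpathN (Kk G) S₀ T (fun s => vol G (s (j+1)) * Real.log (vol G (s (j+1))))
            = EpathN (Kk G) S₀ T
                (fun s => (1:ℝ) * (vol G (s (j+1)) * Real.log (vol G (s (j+1))))) :=
          EpathN_congr' fun s _ _ => by ring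
        have e2 := EpathN_tower (S₀ := S₀) hrow hj (fun _ => (1:ℝ)) (fun _ _ _ => rfl)
          (fun _ S' => vol G S' * Real.log (vol G S'))
        rw [e1, e2]
        have hmono : EpathN (Kk G) S₀ T (fun s => vol G (s j) * Real.log (vol G (s j))
              + (1/4) * (vol G (s j) * (phiCond G (s j))^2))
            ≤ EpathN (Kk G) S₀ T (fun s =>
                (1:ℝ) * ∑ S', Kk G (s j) S' * (vol G S' * Real.log (vol G S'))) := by
          refine EpathN_mono hpos fun s _ _ => ?_
          have := sum_Kk_vol_log (G := G) (s j)
          rw [one_mul]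
          have e4 : vol G (s j) * Real.log (vol G (s j))
              + (1/4) * (vol G (s j) * (phiCond G (s j))^2)
              = vol G (s j) * Real.log (vol G (s j))
                + vol G (s j) * (phiCond G (s j))^2/4 := by ring
          rw [e4]
          exact this
        refine le_trans (le_of_eq ?_) hmono
        rw [EpathN_add, EpathN_const_mul]
      have htele : ∀ t, t ≤ T →
          EpathN (Kk G) S₀ T (fun s => vol G (s 0) * Real.log (vol G (s 0)))
            + (1/4) * ∑ j ∈ Finset.range t, EpathN (Kk G) S₀ T
                (fun s => vol G (s j) * (phiCond G (s j))^2)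
          ≤ EpathN (Kk G) S₀ T (fun s => vol G (s t) * Real.log (vol G (s t))) := by
        intro t
        induction t with
        | zero =>
          intro _
          simp
        | succ t ih =>
          intro h
          have h1 := ih (by omega)
          have h2 := hL t (by omega)
          rw [Finset.sum_range_succ]
          have h3 : 0 ≤ EpathN (Kk G) S₀ T (fun s => vol G (s t) * (phiCond G (s t))^2) :=
            EpathN_nonneg hpos fun s => mul_nonneg (vol_nonneg _) (sq_nonneg _)
          linarith
      have h0 : EpathN (Kk G) S₀ T (fun s => vol G (s 0) * Real.log (vol G (s 0)))
          = vol G S₀ * Real.log (vol G S₀) := by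
        rw [EpathN_congr' (g := fun _ => vol G S₀ * Real.log (vol G S₀))
          (fun s hs _ => by rw [hs]), EpathN_const hrow]
      have hTT : EpathN (Kk G) S₀ T (fun s => vol G (s T) * Real.log (vol G (s T)))
          ≤ vol G S₀ * Real.log M := by
        have hptw : ∀ s : ℕ → Finset V, vol G (s T) * Real.log (vol G (s T))
            ≤ Real.log M * vol G (s T) := by
          intro s
          rw [mul_comm]
          refine mul_le_mul_of_nonneg_right ?_ (vol_nonneg _)
          rcases eq_or_lt_of_le (vol_nonneg (G := G) (s T)) with h | h
          · rw [← h, Real.log_zero]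
            exact hlogM
          · exact Real.log_le_log h (vol_le_vol_univ _)
        calc EpathN (Kk G) S₀ T (fun s => vol G (s T) * Real.log (vol G (s T)))
            ≤ EpathN (Kk G) S₀ T (fun s => Real.log M * vol G (s T)) :=
              EpathN_mono hpos fun s _ _ => hptw s
          _ = Real.log M * EpathN (Kk G) S₀ T (fun s => vol G (s T)) := EpathN_const_mul _ _
          _ = Real.log M * vol G S₀ := by rw [hmart T le_rfl]
          _ = vol G S₀ * Real.log M := mul_comm _ _
      have hfin := le_trans (htele T le_rfl) hTT
      rw [h0] at hfin
      have hlogm0 : 0 ≤ vol G S₀ * Real.log (vol G S₀) :=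
        mul_nonneg (vol_nonneg _) (Real.log_nonneg hm1)
      linarith
    -- final assembly
    have hsum_nonneg : ∀ j, 0 ≤ EpathN (Kk G) S₀ T
        (fun s => vol G (s j) * (phiCond G (s j))^2) := fun j =>
      EpathN_nonneg hpos fun s => mul_nonneg (vol_nonneg _) (sq_nonneg _)
    have h3 : ∑ j ∈ Finset.range T, EpathN (Kk G) S₀ T (fun s => bdry G (s j))
        ≤ 2 * (vol G S₀ * Real.sqrt (T * Real.log M)) := by
      have hstep1 : ∑ j ∈ Finset.range T, EpathN (Kk G) S₀ T (fun s => bdry G (s j))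
          ≤ Real.sqrt (vol G S₀) * ∑ j ∈ Finset.range T,
              Real.sqrt (EpathN (Kk G) S₀ T (fun s => vol G (s j) * (phiCond G (s j))^2)) := by
        rw [Finset.mul_sum]
        refine Finset.sum_le_sum fun j hjm => ?_
        rw [Finset.mem_range] at hjm
        exact hCSj j (by omega)
      have hstep2 : ∑ j ∈ Finset.range T,
            Real.sqrt (EpathN (Kk G) S₀ T (fun s => vol G (s j) * (phiCond G (s j))^2))
          ≤ Real.sqrt T * Real.sqrt (∑ j ∈ Finset.range T,
              EpathN (Kk G) S₀ T (fun s => vol G (s j) * (phiCond G (s j))^2)) := by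
        have hc := Finset.sum_mul_sq_le_sq_mul_sq (Finset.range T) (fun _ => (1:ℝ))
          (fun j => Real.sqrt (EpathN (Kk G) S₀ T
            (fun s => vol G (s j) * (phiCond G (s j))^2)))
        simp only [one_mul, one_pow] at hc
        rw [Finset.sum_const, Finset.card_range, nsmul_eq_mul, mul_one] at hc
        have hsq : ∀ j ∈ Finset.range T,
            (Real.sqrt (EpathN (Kk G) S₀ T (fun s => vol G (s j) * (phiCond G (s j))^2)))^2
            = EpathN (Kk G) S₀ T (fun s => vol G (s j) * (phiCond G (s j))^2) :=
          fun j _ => Real.sq_sqrt (hsum_nonneg j)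
        rw [Finset.sum_congr rfl hsq] at hc
        have hnn : 0 ≤ ∑ j ∈ Finset.range T,
            Real.sqrt (EpathN (Kk G) S₀ T (fun s => vol G (s j) * (phiCond G (s j))^2)) :=
          Finset.sum_nonneg fun j _ => Real.sqrt_nonneg _
        calc ∑ j ∈ Finset.range T,
              Real.sqrt (EpathN (Kk G) S₀ T (fun s => vol G (s j) * (phiCond G (s j))^2))
            = Real.sqrt ((∑ j ∈ Finset.range T,
                Real.sqrt (EpathN (Kk G) S₀ T
                  (fun s => vol G (s j) * (phiCond G (s j))^2)))^2) :=
              (Real.sqrt_sq hnn).symm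
          _ ≤ Real.sqrt ((T:ℝ) * ∑ j ∈ Finset.range T,
                EpathN (Kk G) S₀ T (fun s => vol G (s j) * (phiCond G (s j))^2)) :=
              Real.sqrt_le_sqrt hc
          _ = Real.sqrt T * Real.sqrt (∑ j ∈ Finset.range T,
                EpathN (Kk G) S₀ T (fun s => vol G (s j) * (phiCond G (s j))^2)) :=
              Real.sqrt_mul (by positivity) _
      have hstep3 : Real.sqrt (∑ j ∈ Finset.range T,
            EpathN (Kk G) S₀ T (fun s => vol G (s j) * (phiCond G (s j))^2))
          ≤ Real.sqrt (4 * (vol G S₀ * Real.log M)) := Real.sqrt_le_sqrt hsumphi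
      have hstep4 : Real.sqrt (4 * (vol G S₀ * Real.log M))
          = 2 * (Real.sqrt (vol G S₀) * Real.sqrt (Real.log M)) := by
        rw [Real.sqrt_mul (by norm_num : (0:ℝ) ≤ 4), Real.sqrt_mul (vol_nonneg _)]
        have h4 : Real.sqrt 4 = 2 := by
          rw [show (4:ℝ) = 2^2 by norm_num, Real.sqrt_sq (by norm_num)]
        rw [h4]
      have hs0 : 0 ≤ Real.sqrt (vol G S₀) := Real.sqrt_nonneg _
      calc ∑ j ∈ Finset.range T, EpathN (Kk G) S₀ T (fun s => bdry G (s j))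
          ≤ Real.sqrt (vol G S₀) * ∑ j ∈ Finset.range T,
              Real.sqrt (EpathN (Kk G) S₀ T (fun s => vol G (s j) * (phiCond G (s j))^2)) :=
            hstep1
        _ ≤ Real.sqrt (vol G S₀) * (Real.sqrt T * Real.sqrt (∑ j ∈ Finset.range T,
              EpathN (Kk G) S₀ T (fun s => vol G (s j) * (phiCond G (s j))^2))) :=
            mul_le_mul_of_nonneg_left hstep2 hs0
        _ ≤ Real.sqrt (vol G S₀) * (Real.sqrt T
              * (2 * (Real.sqrt (vol G S₀) * Real.sqrt (Real.log M)))) := by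
            refine mul_le_mul_of_nonneg_left (mul_le_mul_of_nonneg_left ?_
              (Real.sqrt_nonneg _)) hs0
            exact le_trans hstep3 (le_of_eq hstep4)
        _ = 2 * ((Real.sqrt (vol G S₀) * Real.sqrt (vol G S₀))
              * (Real.sqrt T * Real.sqrt (Real.log M))) := by ring
        _ = 2 * (vol G S₀ * Real.sqrt (T * Real.log M)) := by
            rw [Real.mul_self_sqrt (vol_nonneg _),
              ← Real.sqrt_mul (by positivity : (0:ℝ) ≤ (T:ℝ))]
    rw [hC1]
    have hchain : EpathN (Kk G) S₀ T
          (fun s => vol G (s T) * (costPath G s (τ s) / vol G (s (τ s))))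
        ≤ vol G S₀ * (1 + 4 * Real.sqrt (T * Real.log M)) := by
      calc EpathN (Kk G) S₀ T
            (fun s => vol G (s T) * (costPath G s (τ s) / vol G (s (τ s))))
          ≤ EpathN (Kk G) S₀ T (fun s => costPath G s (τ s)) := hC2
        _ ≤ vol G S₀ + 2 * ∑ j ∈ Finset.range T,
              EpathN (Kk G) S₀ T (fun s => bdry G (s j)) := hC3
        _ ≤ vol G S₀ + 2 * (2 * (vol G S₀ * Real.sqrt (T * Real.log M))) := by linarith
        _ = vol G S₀ * (1 + 4 * Real.sqrt (T * Real.log M)) := by ring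
    have hfinal : (1 / vol G S₀) * (vol G S₀ * (1 + 4 * Real.sqrt (T * Real.log M)))
        = 1 + 4 * Real.sqrt (T * Real.log M) := by
      field_simp
    calc (1 / vol G S₀) * EpathN (Kk G) S₀ T
          (fun s => vol G (s T) * (costPath G s (τ s) / vol G (s (τ s))))
        ≤ (1 / vol G S₀) * (vol G S₀ * (1 + 4 * Real.sqrt (T * Real.log M))) :=
          mul_le_mul_of_nonneg_left hchain (by positivity)
      _ = 1 + 4 * Real.sqrt (T * Real.log M) := hfinal
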